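/- arXiv:1705.04501 — 2 statements merged into one kernel-verified Lean document; each statement's English description precedes it below -/
import Mathlib

section
/- For every positive integer p there exists a constant K*(p) > 0, depending only on p, with the following property: for every field with involution F, every eps > 0, every unital *-algebra B over F equipped with a pseudo-rank function N satisfying N(b*) = N(b) for all b in B, every unital *-regular *-subalgebra A of B, and every *-algebra homomorphism rho : M_p(F) -> B (where M_p(F) carries the *-transpose involution) such that for all 1 <= i, j <= p there exists a in A with N(rho(e_ij) - a) < eps (e_ij the canonical matrix units of M_p(F)), there exists a *-algebra homomorphism psi : M_p(F) -> A with N(rho(e_ij) - psi(e_ij)) < K*(p) * eps for all 1 <= i, j <= p. -/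
open scoped TensorProduct Kronecker

noncomputable section

namespace AraClaramunt

/-! ### Pseudo-rank functions and rank metric notions -/

/-- A pseudo-rank function on a unital ring. -/
structure IsPseudoRankFunction {R : Type*} [Ring R] (N : R → ℝ) : Prop where
  nonneg : ∀ x : R, 0 ≤ N x
  le_one : ∀ x : R, N x ≤ 1
  map_one : N 1 = 1
  subadditive : ∀ a b : R, N (a + b) ≤ N a + N b
  mul_le_left : ∀ a b : R, N (a * b) ≤ N a
  mul_le_right : ∀ a b : R, N (a * b) ≤ N b
  add_of_orthogonal : ∀ e f : R, IsIdempotentElem e → IsIdempotentElem f →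
    e * f = 0 → f * e = 0 → N (e + f) = N e + N f

/-- A rank function is a faithful pseudo-rank function. -/
def IsRankFunction {R : Type*} [Ring R] (N : R → ℝ) : Prop :=
  IsPseudoRankFunction N ∧ ∀ x : R, N x = 0 → x = 0

/-- Cauchy sequence for the pseudo-metric `d(x,y) = N (x - y)`. -/
def RankCauchy {R : Type*} [Ring R] (N : R → ℝ) (u : ℕ → R) : Prop :=
  ∀ ε : ℝ, 0 < ε → ∃ n₀ : ℕ, ∀ m n : ℕ, n₀ ≤ m → n₀ ≤ n → N (u m - u n) < ε

/-- Convergence for the pseudo-metric `d(x,y) = N (x - y)`. -/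
def RankTendsto {R : Type*} [Ring R] (N : R → ℝ) (u : ℕ → R) (x : R) : Prop :=
  ∀ ε : ℝ, 0 < ε → ∃ n₀ : ℕ, ∀ n : ℕ, n₀ ≤ n → N (u n - x) < ε

/-- Completeness with respect to the pseudo-metric `d(x,y) = N (x - y)`. -/
def RankComplete {R : Type*} [Ring R] (N : R → ℝ) : Prop :=
  ∀ u : ℕ → R, RankCauchy N u → ∃ x : R, RankTendsto N u x

/-- Density of a subset with respect to the pseudo-metric `d(x,y) = N (x - y)`. -/
def RankDense {R : Type*} [Ring R] (N : R → ℝ) (S : Set R) : Prop :=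
  ∀ x : R, ∀ ε : ℝ, 0 < ε → ∃ y ∈ S, N (x - y) < ε

/-- von Neumann regularity. -/
def VNRegular (R : Type*) [Ring R] : Prop :=
  ∀ x : R, ∃ y : R, x = x * y * x

/-- A continuous factor: a simple, von Neumann regular, right and left self-injective ring
admitting a rank function whose image is all of `[0,1]`. -/
def IsContinuousFactor (R : Type*) [Ring R] : Prop :=
  IsSimpleRing R ∧ VNRegular R ∧ Module.Injective R R ∧ Module.Injective Rᵐᵒᵖ Rᵐᵒᵖ ∧
    ∃ N : R → ℝ, IsRankFunction N ∧ Set.range N = Set.Icc (0 : ℝ) 1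

/-- An extremal pseudo-rank function: an extreme point of the convex set of all
pseudo-rank functions. -/
def IsExtremalPseudoRankFunction {R : Type*} [Ring R] (N : R → ℝ) : Prop :=
  N ∈ Set.extremePoints ℝ {S : R → ℝ | IsPseudoRankFunction S}

/-! ### Matricial and ultramatricial algebras -/

/-- A matricial `K`-algebra. -/
def IsMatricialAlgebra (K : Type*) [Field K] (A : Type*) [Ring A] [Algebra K A] : Prop :=
  ∃ (k : ℕ) (n : Fin (k + 1) → ℕ), (∀ i, 0 < n i) ∧
    Nonempty (A ≃ₐ[K] ((i : Fin (k + 1)) → Matrix (Fin (n i)) (Fin (n i)) K))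

/-- An ultramatricial `K`-algebra: the increasing union of matricial subalgebras. -/
def IsUltramatricialAlgebra (K : Type*) [Field K] (B : Type*) [Ring B] [Algebra K B] : Prop :=
  ∃ C : ℕ → Subalgebra K B, (∀ n, C n ≤ C (n + 1)) ∧
    (∀ n, IsMatricialAlgebra K (C n)) ∧ (∀ b : B, ∃ n, b ∈ C n)

/-- `Q`, with rank function `N`, is the rank-metric completion of a direct limit of the matrix
algebras `M_{p n}(K)`: it is complete and carries a dense increasing tower of unital subalgebras
isomorphic to `M_{p n}(K)`. -/
def IsMatrixTowerCompletion (K : Type*) [Field K] (Q : Type*) [Ring Q] [Algebra K Q]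
    (N : Q → ℝ) (p : ℕ → ℕ) : Prop :=
  IsRankFunction N ∧ RankComplete N ∧
    ∃ A : ℕ → Subalgebra K Q, (∀ n, A n ≤ A (n + 1)) ∧
      (∀ n, Nonempty ((A n) ≃ₐ[K] Matrix (Fin (p n)) (Fin (p n)) K)) ∧
      RankDense N (⋃ n, (A n : Set Q))

/-- `Q` is (a copy of) von Neumann's continuous factor `M_K`, the completion of
`lim_n M_{2^n}(K)` with respect to its unique rank function. -/
def IsMK (K : Type*) [Field K] (Q : Type*) [Ring Q] [Algebra K Q] (N : Q → ℝ) : Prop :=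
  IsMatrixTowerCompletion K Q N (fun n => 2 ^ n)

/-- The canonical block-diagonal unital embedding `M_a(K) → M_b(K)`, `z ↦ z ⊗ 1_g`,
where `b = a * g`. -/
def blockEmbedFun (K : Type*) [Semiring K] {a : ℕ} (g b : ℕ) (h : a * g = b)
    (z : Matrix (Fin a) (Fin a) K) : Matrix (Fin b) (Fin b) K :=
  Matrix.reindex (finProdFinEquiv.trans (finCongr h)) (finProdFinEquiv.trans (finCongr h))
    (z ⊗ₖ (1 : Matrix (Fin g) (Fin g) K))

end AraClaramunt
namespace AraClaramunt

/-! ### Star notions -/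

/-- Properness of an involution: `x* x = 0` implies `x = 0`. -/
def ProperStar (R : Type*) [NonUnitalNonAssocRing R] [Star R] : Prop :=
  ∀ x : R, star x * x = 0 → x = 0

/-- A projection: a self-adjoint idempotent. -/
def IsProjection {R : Type*} [Mul R] [Star R] (p : R) : Prop :=
  star p = p ∧ p * p = p

/-- The order on projections: `q ≤ p` iff `p q = q p = q`. -/
def ProjLE {R : Type*} [Mul R] (q p : R) : Prop :=
  p * q = q ∧ q * p = q

/-- `*`-equivalence of projections: `e = w w*` and `f = w* w` for some `w`. -/
def StarEquivProj {R : Type*} [Mul R] [Star R] (e f : R) : Prop :=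
  ∃ w : R, e = w * star w ∧ f = star w * w

/-- Equivalence of projections: `e = x y`, `f = y x` with `x ∈ eRf`, `y ∈ fRe`. -/
def EquivProj {R : Type*} [Mul R] (e f : R) : Prop :=
  ∃ x y : R, x = e * x * f ∧ y = f * y * e ∧ e = x * y ∧ f = y * x

/-- `y` is the relative inverse of `x` in a `*`-regular ring. -/
def IsRelativeInverse {R : Type*} [Mul R] [Star R] (x y : R) : Prop :=
  x * y * x = x ∧ y * x * y = y ∧ star (x * y) = x * y ∧ star (y * x) = y * x

/-- `e = LP(x)`: `e` is a projection with `x R = e R`. -/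
def IsLeftProjOf {R : Type*} [Mul R] [Star R] (x e : R) : Prop :=
  IsProjection e ∧ e * x = x ∧ ∃ y : R, e = x * y

/-- `f = RP(x)`: `f` is a projection with `R x = R f`. -/
def IsRightProjOf {R : Type*} [Mul R] [Star R] (x f : R) : Prop :=
  IsProjection f ∧ x * f = x ∧ ∃ y : R, f = y * x

/-- Positive definiteness of the involution of a field. -/
def PosDefStar (F : Type*) [Field F] [StarRing F] : Prop :=
  ∀ (n : ℕ) (x : Fin n → F), (∑ i, star (x i) * x i) = 0 → ∀ i, x i = 0

/-- `*`-Pythagorean field. -/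
def StarPythagorean (F : Type*) [Field F] [StarRing F] : Prop :=
  ∀ x y : F, ∃ z : F, x * star x + y * star y = z * star z

/-- A standard matricial `*`-algebra over `(F, *)`: a `*`-algebra `*`-isomorphic to a finite
product of matrix algebras `M_{n i}(F)` with the `*`-transpose involution. -/
def IsStandardMatricialStarAlgebra (F : Type*) [Field F] [StarRing F]
    (A : Type*) [Ring A] [Algebra F A] [StarRing A] [StarModule F A] : Prop :=
  ∃ (k : ℕ) (n : Fin (k + 1) → ℕ), (∀ i, 0 < n i) ∧
    Nonempty (A ≃⋆ₐ[F] ((i : Fin (k + 1)) → Matrix (Fin (n i)) (Fin (n i)) F))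

/-- A map `M_a(F) → M_b(F)` is standard (up to a permutation of the index set) if it is
`z ↦ diag(z, …, z)` (multiplicity `t`), suitably reindexed. -/
def IsStandardMatrixMap (F : Type*) [Field F] {a b : ℕ}
    (Φ : Matrix (Fin a) (Fin a) F → Matrix (Fin b) (Fin b) F) : Prop :=
  ∃ (t : ℕ) (E : Fin a × Fin t ≃ Fin b),
    ∀ z, Φ z = Matrix.reindex E E (Matrix.blockDiagonal fun _ : Fin t => z)

/-- A map between finite products of matrix algebras over `F` is standard (block diagonal,
up to a permutation of the index sets): it is determined by multiplicities `t j i`, the `j`-th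
component being the block-diagonal sum of `t j i` copies of the `i`-th component of the input. -/
def IsStandardBlockMap (F : Type*) [Field F] {k l : ℕ} (n : Fin (k + 1) → ℕ)
    (m : Fin (l + 1) → ℕ)
    (Φ : ((i : Fin (k + 1)) → Matrix (Fin (n i)) (Fin (n i)) F) →
      ((j : Fin (l + 1)) → Matrix (Fin (m j)) (Fin (m j)) F)) : Prop :=
  ∃ t : Fin (l + 1) → Fin (k + 1) → ℕ,
    ∃ E : (j : Fin (l + 1)) →
      ((Σ c : (Σ i : Fin (k + 1), Fin (t j i)), Fin (n c.1)) ≃ Fin (m j)),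
      ∀ z j, Φ z j =
        Matrix.reindex (E j) (E j)
          (Matrix.blockDiagonal' fun c : (Σ i : Fin (k + 1), Fin (t j i)) => z c.1)

end AraClaramunt
namespace AraClaramunt

/-- The `*`-matrix-unit approximation property for a constant `c` and a size `p`
(Lemma 4.8 of the paper): `*`-matrix units of `M_p(F)` which are almost contained in a
`*`-regular `*`-subalgebra `A` (up to `ε` in rank) can be realized exactly inside `A`, moving
each of them by at most `c * ε`. -/
def StarMatrixUnitApproxProperty (c : ℝ) (p : ℕ) : Prop :=
  ∀ (F : Type) [Field F] [StarRing F]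
    (B : Type) [Ring B] [Algebra F B] [StarRing B] [StarModule F B]
    (N : B → ℝ) (A : StarSubalgebra F B),
    IsPseudoRankFunction N → (∀ b : B, N (star b) = N b) →
    (∀ x ∈ A, ∃ y ∈ A, x = x * y * x) →
    (∀ x ∈ A, star x * x = 0 → x = 0) →
    ∀ ε : ℝ, 0 < ε →
      ∀ ρ : Matrix (Fin p) (Fin p) F →⋆ₙₐ[F] B,
        (∀ i j : Fin p, ∃ a ∈ A, N (ρ (Matrix.single i j 1) - a) < ε) →
          ∃ ψ : Matrix (Fin p) (Fin p) F →⋆ₙₐ[F] A,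
            ∀ i j : Fin p,
              N (ρ (Matrix.single i j 1)
                - (ψ (Matrix.single i j 1) : B)) < c * ε

section AuxN
variable {B : Type*} [Ring B] {N : B → ℝ} (hN : IsPseudoRankFunction N)
include hN

lemma N_zero' : N 0 = 0 := by
  have h := hN.add_of_orthogonal 0 0 IsIdempotentElem.zero IsIdempotentElem.zero
    (by simp) (by simp)
  simp only [add_zero] at h
  linarith

lemma N_neg' (x : B) : N (-x) = N x := by
  have h1 := hN.mul_le_right (-1 : B) x
  have h2 := hN.mul_le_right (-1 : B) (-x)
  rw [neg_one_mul] at h1 h2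
  rw [neg_neg] at h2
  linarith

lemma N_sub_rev' (x y : B) : N (x - y) = N (y - x) := by
  have := N_neg' hN (x - y); rw [neg_sub] at this; exact this.symm

lemma N_tri' (x y z : B) : N (x - z) ≤ N (x - y) + N (y - z) := by
  have h := hN.subadditive (x - y) (y - z)
  rwa [sub_add_sub_cancel] at h

lemma N_add3' (a b c : B) : N (a + b + c) ≤ N a + N b + N c := by
  have h1 := hN.subadditive (a + b) c
  have h2 := hN.subadditive a b
  linarith

end AuxN

section Support

variable {F : Type} [Field F] [StarRing F]
variable {B : Type} [Ring B] [Algebra F B] [StarRing B] [StarModule F B]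
variable {N : B → ℝ}
variable {A : StarSubalgebra F B}

/-- Support projection lemma. -/
lemma support_lemma (hN : IsPseudoRankFunction N)
    (hreg : ∀ x ∈ A, ∃ y ∈ A, x = x * y * x)
    (hproper : ∀ x ∈ A, star x * x = 0 → x = 0)
    (d : B) (hdA : d ∈ A) (hd : star d = d) :
    ∃ g μ : B, g ∈ A ∧ μ ∈ A ∧ star μ = μ ∧ IsProjection g ∧
      g * d = d ∧ d * g = d ∧ g = d * μ * d ∧ N g ≤ N d ∧
      (∀ y : B, y * d = d * y → y * g = g * y) := by
  obtain ⟨t, htA, ht⟩ := hreg (d * d) (mul_mem hdA hdA)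
  set μ : B := t * (d * d) * star t with hμdef
  have hμA : μ ∈ A := mul_mem (mul_mem htA (mul_mem hdA hdA)) (star_mem htA)
  have hdd : star (d * d) = d * d := by rw [star_mul, hd]
  have hμstar : star μ = μ := by
    rw [hμdef]; simp only [star_mul, hdd, star_star]; noncomm_ring
  have htstar : d * d * star t * (d * d) = d * d := by
    have h := congrArg star ht
    simp only [star_mul, hdd, hd, star_star, ← mul_assoc] at h
    rw [← mul_assoc]
    exact h.symm
  have hK : d * d * μ * (d * d) = d * d := by
    have e1 : d * d * μ * (d * d) = (d * d * t * (d * d)) * (star t * (d * d)) := by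
      rw [hμdef]; noncomm_ring
    rw [e1, ← ht, ← mul_assoc]; exact htstar
  set s : B := d - d * μ * (d * d) with hsdef
  have hsA : s ∈ A := sub_mem hdA (mul_mem (mul_mem hdA hμA) (mul_mem hdA hdA))
  have hss : star s * s = 0 := by
    have hstars : star s = d - d * d * μ * d := by
      rw [hsdef]
      simp only [star_sub, star_mul, hd, hμstar, star_star, ← mul_assoc]
    rw [hstars, hsdef]
    have expand : (d - d * d * μ * d) * (d - d * μ * (d * d)) =
        d * d - d * d * μ * (d * d) - d * d * μ * (d * d) + d * d * μ * (d * d * μ * (d * d)) := by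
      noncomm_ring
    rw [expand, hK, hK]
    abel
  have hs0 : s = 0 := hproper s hsA hss
  have hK2 : d * μ * (d * d) = d := by
    have := sub_eq_zero.mp (hsdef ▸ hs0)
    exact this.symm
  have hK3 : d * d * μ * d = d := by
    have h := congrArg star hK2
    simp only [star_mul, hd, hμstar, star_star, ← mul_assoc] at h
    exact h
  refine ⟨d * μ * d, μ, mul_mem (mul_mem hdA hμA) hdA, hμA, hμstar, ⟨?_, ?_⟩, ?_, ?_, rfl, ?_, ?_⟩
  · simp only [star_mul, hd, hμstar, star_star, ← mul_assoc]
  · have e2 : (d * μ * d) * (d * μ * d) = d * μ * (d * d * μ * d) := by noncomm_ring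
    rw [e2, hK3]
  · have e3 : (d * μ * d) * d = d * μ * (d * d) := by noncomm_ring
    rw [e3, hK2]
  · have e4 : d * (d * μ * d) = d * d * μ * d := by noncomm_ring
    rw [e4, hK3]
  · exact hN.mul_le_right (d * μ) d
  · intro y hy
    have hgd : (d * μ * d) * d = d := by
      have e3 : (d * μ * d) * d = d * μ * (d * d) := by noncomm_ring
      rw [e3, hK2]
    have hdg : d * (d * μ * d) = d := by
      have e4 : d * (d * μ * d) = d * d * μ * d := by noncomm_ring
      rw [e4, hK3]
    have e5 : y * (d * μ * d) = d * (y * (μ * d)) := by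
      calc y * (d * μ * d) = (y * d) * (μ * d) := by noncomm_ring
        _ = (d * y) * (μ * d) := by rw [hy]
        _ = d * (y * (μ * d)) := by noncomm_ring
    have e6 : (d * μ * d) * (y * (d * μ * d)) = y * (d * μ * d) := by
      rw [e5]
      calc (d * μ * d) * (d * (y * (μ * d))) = ((d * μ * d) * d) * (y * (μ * d)) := by
            noncomm_ring
        _ = d * (y * (μ * d)) := by rw [hgd]
    have e7 : (d * μ * d) * y * (d * μ * d) = (d * μ * d) * y := by
      calc (d * μ * d) * y * (d * μ * d) = (d * μ) * ((d * y) * (d * μ * d)) := by noncomm_ring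
        _ = (d * μ) * ((y * d) * (d * μ * d)) := by rw [hy]
        _ = (d * μ) * (y * (d * (d * μ * d))) := by noncomm_ring
        _ = (d * μ) * (y * d) := by rw [hdg]
        _ = (d * μ) * (d * y) := by rw [hy]
        _ = (d * μ * d) * y := by noncomm_ring
    calc y * (d * μ * d) = (d * μ * d) * (y * (d * μ * d)) := e6.symm
      _ = (d * μ * d) * y * (d * μ * d) := by noncomm_ring
      _ = (d * μ * d) * y := e7

lemma N_sub_le' (hN : IsPseudoRankFunction N) (a b : B) : N (a - b) ≤ N a + N b := by
  have h := hN.subadditive a (-b)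
  rw [← sub_eq_add_neg] at h
  have := N_neg' hN b
  linarith

/-- From an almost-projection to the support projection. -/
lemma proj_approx (hN : IsPseudoRankFunction N) (X b g μ : B)
    (hXX : X * X = X) (hbg : b * g = b) (hg : g = b * μ * b) :
    N (X - g) ≤ 3 * N (X - b) := by
  have c1 : b * (1 - g) = 0 := by rw [mul_sub, mul_one, hbg, sub_self]
  have c2 : X * (1 - g) = (X - b) * (1 - g) := by
    rw [sub_mul, c1, sub_zero]
  have c3 : (1 - X) * g = ((b - X) + X * (X - b)) * (μ * b) := by
    have h1 : (1 - X) * g = ((1 - X) * b) * (μ * b) := by rw [hg]; noncomm_ring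
    have h2 : (b - X) + X * (X - b) = (1 - X) * b := by
      rw [mul_sub, hXX]; noncomm_ring
    rw [h1, ← h2]
  have key : X - g = X * (1 - g) - (1 - X) * g := by noncomm_ring
  have b1 : N (X * (1 - g)) ≤ N (X - b) := by
    rw [c2]; exact hN.mul_le_left _ _
  have b2 : N ((1 - X) * g) ≤ 2 * N (X - b) := by
    rw [c3]
    have h3 : N (((b - X) + X * (X - b)) * (μ * b)) ≤ N ((b - X) + X * (X - b)) :=
      hN.mul_le_left _ _
    have h4 : N ((b - X) + X * (X - b)) ≤ N (b - X) + N (X * (X - b)) := hN.subadditive _ _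
    have h5 : N (X * (X - b)) ≤ N (X - b) := hN.mul_le_right _ _
    have h6 : N (b - X) = N (X - b) := N_sub_rev' hN b X
    linarith
  have b0 : N (X - g) ≤ N (X * (1 - g)) + N ((1 - X) * g) := by
    rw [key]; exact N_sub_le' hN _ _
  linarith

/-- Meet of two projections. -/
lemma meet_lemma (hN : IsPseudoRankFunction N)
    (hreg : ∀ x ∈ A, ∃ y ∈ A, x = x * y * x)
    (hproper : ∀ x ∈ A, star x * x = 0 → x = 0)
    (e e' : B) (heA : e ∈ A) (he'A : e' ∈ A)
    (hpe : IsProjection e) (hpe' : IsProjection e') :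
    ∃ m : B, m ∈ A ∧ IsProjection m ∧ m * e = m ∧ e * m = m ∧ m * e' = m ∧ e' * m = m ∧
      N (e - m) ≤ N (e - e * e') := by
  set x : B := e - e * e' with hxdef
  have hxA : x ∈ A := sub_mem heA (mul_mem heA he'A)
  have hstarx : star x = e - e' * e := by
    rw [hxdef]; simp only [star_sub, star_mul, hpe.1, hpe'.1]
  have hex : e * x = x := by
    rw [hxdef, mul_sub, ← mul_assoc, hpe.2]
  have hxe : star x * e = star x := by
    rw [hstarx, sub_mul, hpe.2, mul_assoc, hpe.2]
  set D : B := x * star x with hDdef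
  have hDA : D ∈ A := mul_mem hxA (star_mem hxA)
  have hDstar : star D = D := by rw [hDdef, star_mul, star_star]
  obtain ⟨g, μ, hgA, hμA, hμstar, hgproj, hgD, hDg, hgform, hNg, -⟩ :=
    support_lemma hN hreg hproper D hDA hDstar
  have heD : e * D = D := by rw [hDdef, ← mul_assoc, hex]
  have hDe : D * e = D := by rw [hDdef, mul_assoc, hxe]
  have heg : e * g = g := by
    calc e * g = (e * D) * (μ * D) := by rw [hgform]; noncomm_ring
      _ = D * (μ * D) := by rw [heD]
      _ = g := by rw [hgform]; noncomm_ring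
  have hge : g * e = g := by
    calc g * e = (D * μ) * (D * e) := by rw [hgform]; noncomm_ring
      _ = (D * μ) * D := by rw [hDe]
      _ = g := by rw [hgform]
  have hgx : g * x = x := by
    set z : B := x - g * x with hzdef
    have hzA : z ∈ A := sub_mem hxA (mul_mem hgA hxA)
    have hstarz : star z = star x - star x * g := by
      rw [hzdef, star_sub, star_mul, hgproj.1]
    have hzz : z * star z = 0 := by
      rw [hzdef, hstarz]
      have expand : (x - g * x) * (star x - star x * g) =
          x * star x - (x * star x) * g - g * (x * star x) + g * ((x * star x) * g) := by
        noncomm_ring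
      rw [expand, ← hDdef, hDg, hgD]
      abel
    have hz0 : star z = 0 := hproper (star z) (star_mem hzA) (by rw [star_star]; exact hzz)
    have : z = 0 := by
      have := congrArg star hz0
      rwa [star_star, star_zero] at this
    rw [hzdef] at this
    have := sub_eq_zero.mp this
    exact this.symm
  have hxg : star x * g = star x := by
    have := congrArg star hgx
    rwa [star_mul, hgproj.1] at this
  refine ⟨e - g, sub_mem heA hgA, ⟨?_, ?_⟩, ?_, ?_, ?_, ?_, ?_⟩
  · rw [star_sub, hpe.1, hgproj.1]
  · have : (e - g) * (e - g) = e * e - e * g - g * e + g * g := by noncomm_ring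
    rw [this, hpe.2, heg, hge, hgproj.2]; abel
  · rw [sub_mul, hpe.2, hge]
  · rw [mul_sub, hpe.2, heg]
  · -- (e - g) * e' = e - g
    have h1 : e' * (e - g) = e - g := by
      have hxm : star x * (e - g) = 0 := by
        rw [mul_sub, hxe, hxg, sub_self]
      rw [hstarx] at hxm
      have h2 : e * (e - g) - e' * (e * (e - g)) = 0 := by
        calc e * (e - g) - e' * (e * (e - g)) = (e - e' * e) * (e - g) := by noncomm_ring
          _ = 0 := hxm
      have h3 : e * (e - g) = e - g := by rw [mul_sub, hpe.2, heg]
      rw [h3] at h2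
      have := sub_eq_zero.mp h2
      exact this.symm
    have := congrArg star h1
    rwa [star_mul, star_sub, hpe.1, hgproj.1, hpe'.1] at this
  · have hxm : star x * (e - g) = 0 := by
      rw [mul_sub, hxe, hxg, sub_self]
    rw [hstarx] at hxm
    have h2 : e * (e - g) - e' * (e * (e - g)) = 0 := by
      calc e * (e - g) - e' * (e * (e - g)) = (e - e' * e) * (e - g) := by noncomm_ring
        _ = 0 := hxm
    have h3 : e * (e - g) = e - g := by rw [mul_sub, hpe.2, heg]
    rw [h3] at h2
    have := sub_eq_zero.mp h2
    exact this.symm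
  · have h1 : e - (e - g) = g := by abel
    rw [h1]
    have h2 : N g ≤ N D := hNg
    have h3 : N D ≤ N x := by rw [hDdef]; exact hN.mul_le_left _ _
    rw [hxdef] at h3
    linarith

/-- Partial isometry approximation lemma. -/
lemma pisom_lemma (hN : IsPseudoRankFunction N)
    (hstarN : ∀ b : B, N (star b) = N b)
    (hreg : ∀ x ∈ A, ∃ y ∈ A, x = x * y * x)
    (hproper : ∀ x ∈ A, star x * x = 0 → x = 0)
    (q c : B) (hcA : c ∈ A) (hq : q * (star q * q) = q) :
    ∃ w P : B, w ∈ A ∧ P ∈ A ∧ IsProjection P ∧ star w * w = P ∧ w = c * P ∧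
      (∀ f : B, IsProjection f → c * f = c → P * f = P ∧ f * P = P) ∧
      N (q - w) ≤ 17 * N (q - c) := by
  set q2 : B := star q * q with hq2def
  set z : B := star c * c with hzdef
  have hzA : z ∈ A := mul_mem (star_mem hcA) hcA
  have hzstar : star z = z := by rw [hzdef, star_mul, star_star]
  set d : B := z * z - z with hddef
  have hdA : d ∈ A := sub_mem (mul_mem hzA hzA) hzA
  have hdstar : star d = d := by rw [hddef, star_sub, star_mul, hzstar]
  obtain ⟨g, μ, hgA, hμA, hμstar, hgproj, hgd, hdg, hgform, hNg, hcomm⟩ :=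
    support_lemma hN hreg hproper d hdA hdstar
  have hzd : z * d = d * z := by rw [hddef]; noncomm_ring
  have hzg : z * g = g * z := hcomm z hzd
  set P : B := z - z * g with hPdef
  have hPA : P ∈ A := sub_mem hzA (mul_mem hzA hgA)
  have hPstar : star P = P := by
    rw [hPdef, star_sub]
    rw [show star (z * g) = g * z from by rw [star_mul, hgproj.1, hzstar]]
    rw [hzstar, ← hzg]
  have hzz : z * z = z + d := by rw [hddef]; abel
  have hzP : z * P = P := by
    calc z * P = z * z - z * z * g := by rw [hPdef]; noncomm_ring
      _ = (z + d) - (z + d) * g := by rw [hzz]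
      _ = (z - z * g) + (d - d * g) := by noncomm_ring
      _ = P := by rw [hdg, sub_self, add_zero, hPdef]
  have hgP : g * P = 0 := by
    calc g * P = g * z - (g * z) * g := by rw [hPdef]; noncomm_ring
      _ = z * g - (z * g) * g := by rw [← hzg]
      _ = z * g - z * (g * g) := by noncomm_ring
      _ = 0 := by rw [hgproj.2, sub_self]
  have hPP : P * P = P := by
    have h1 : P * P = z * P - z * (g * P) := by rw [hPdef]; noncomm_ring
    rw [h1, hgP, mul_zero, sub_zero, hzP]
  have hPz : P * z = P := by
    have h := congrArg star hzP
    rwa [star_mul, hPstar, hzstar] at h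
  refine ⟨c * P, P, mul_mem hcA hPA, hPA, ⟨hPstar, hPP⟩, ?_, rfl, ?_, ?_⟩
  · calc star (c * P) * (c * P) = (P * star c) * (c * P) := by rw [star_mul, hPstar]
      _ = P * (z * P) := by rw [hzdef]; noncomm_ring
      _ = P := by rw [hzP, hPP]
  · intro f hf hcf
    have hzf : z * f = z := by rw [hzdef, mul_assoc, hcf]
    have hfz : f * z = z := by
      have h := congrArg star hzf
      rwa [star_mul, hzstar, hf.1] at h
    have hdf : d * f = d := by
      rw [hddef, sub_mul, mul_assoc, hzf]
    have hfd : f * d = d := by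
      have h := congrArg star hdf
      rwa [star_mul, hdstar, hf.1] at h
    have hgf : g * f = g := by
      calc g * f = (d * μ) * (d * f) := by rw [hgform]; noncomm_ring
        _ = (d * μ) * d := by rw [hdf]
        _ = g := by rw [hgform]
    have hfg : f * g = g := by
      calc f * g = (f * d) * (μ * d) := by rw [hgform]; noncomm_ring
        _ = d * (μ * d) := by rw [hfd]
        _ = g := by rw [hgform]; noncomm_ring
    constructor
    · calc P * f = z * f - z * (g * f) := by rw [hPdef]; noncomm_ring
        _ = z - z * g := by rw [hzf, hgf]
        _ = P := by rw [hPdef]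
    · calc f * P = f * z - (f * z) * g := by rw [hPdef]; noncomm_ring
        _ = z - z * g := by rw [hfz]
        _ = P := by rw [hPdef]
  · -- the rank estimate
    set δ : ℝ := N (q - c) with hδdef
    have hδ0 : 0 ≤ δ := hN.nonneg _
    have hq2sq : q2 * q2 = q2 := by
      calc q2 * q2 = star q * (q * q2) := by rw [hq2def]; noncomm_ring
        _ = star q * q := by rw [hq]
        _ = q2 := by rw [hq2def]
    have h1 : N (q2 - z) ≤ 2 * δ := by
      have hid : q2 - z = star (q - c) * q + star c * (q - c) := by
        rw [star_sub, hq2def, hzdef]; noncomm_ring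
      have hb : N (q2 - z) ≤ N (star (q - c) * q) + N (star c * (q - c)) := by
        rw [hid]; exact hN.subadditive _ _
      have hb1 : N (star (q - c) * q) ≤ δ := by
        have := hN.mul_le_left (star (q - c)) q
        rw [hstarN (q - c)] at this
        exact this
      have hb2 : N (star c * (q - c)) ≤ δ := hN.mul_le_right _ _
      linarith
    have h2 : N d ≤ 6 * δ := by
      have hid : d = (z - q2) * z + q2 * (z - q2) + (q2 * q2 - z) := by
        rw [hddef]; noncomm_ring
      rw [hq2sq] at hid
      have hb : N d ≤ N ((z - q2) * z) + N (q2 * (z - q2)) + N (q2 - z) := by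
        rw [hid]; exact N_add3' hN _ _ _
      have hb1 : N ((z - q2) * z) ≤ N (z - q2) := hN.mul_le_left _ _
      have hb2 : N (q2 * (z - q2)) ≤ N (z - q2) := hN.mul_le_right _ _
      have hb3 : N (z - q2) = N (q2 - z) := N_sub_rev' hN _ _
      linarith
    have h3 : N (z - P) ≤ 6 * δ := by
      have hid : z - P = z * g := by rw [hPdef]; abel
      rw [hid]
      have := hN.mul_le_right z g
      linarith
    have h4 : N (q2 - P) ≤ 8 * δ := by
      have := N_tri' hN q2 z P
      linarith
    have h6 : N (q - q * P) ≤ 16 * δ := by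
      have h7 : q - q * P = q * (q2 - q2 * P) := by
        have hh : q * (q2 - q2 * P) = (q * q2) - (q * q2) * P := by noncomm_ring
        rw [hq] at hh
        exact hh.symm
      have h8 : q2 - q2 * P = (q2 - P) + ((P - q2) * P + (P - P * P)) := by noncomm_ring
      rw [hPP, sub_self, add_zero] at h8
      have hb : N (q2 - q2 * P) ≤ N (q2 - P) + N ((P - q2) * P) := by
        rw [h8]; exact hN.subadditive _ _
      have hb1 : N ((P - q2) * P) ≤ N (P - q2) := hN.mul_le_left _ _
      have hb2 : N (P - q2) = N (q2 - P) := N_sub_rev' hN _ _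
      have hb3 : N (q - q * P) ≤ N (q2 - q2 * P) := by
        rw [h7]; exact hN.mul_le_right _ _
      linarith
    have h5 : q - c * P = (q - c) * P + (q - q * P) := by noncomm_ring
    have hb : N (q - c * P) ≤ N ((q - c) * P) + N (q - q * P) := by
      rw [h5]; exact hN.subadditive _ _
    have hb1 : N ((q - c) * P) ≤ δ := hN.mul_le_left _ _
    linarith

end Support



section Psi
variable {F : Type} [Field F] [StarRing F]
variable {B : Type} [Ring B] [Algebra F B] [StarRing B] [StarModule F B]
variable {A : StarSubalgebra F B}

lemma mk_psi {p : ℕ} (f : Fin p → Fin p → B) (hfA : ∀ i j, f i j ∈ A)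
    (hmul : ∀ i j k l : Fin p, f i j * f k l = if j = k then f i l else 0)
    (hstarf : ∀ i j, star (f i j) = f j i) :
    ∃ ψ : Matrix (Fin p) (Fin p) F →⋆ₙₐ[F] A,
      ∀ i j : Fin p, (ψ (Matrix.single i j 1) : B) = f i j := by
  classical
  set Fm : Fin p → Fin p → A := fun i j => ⟨f i j, hfA i j⟩ with hFm
  have hmul' : ∀ i j k l : Fin p, Fm i j * Fm k l = if j = k then Fm i l else 0 := by
    intro i j k l
    apply Subtype.ext
    have : ((Fm i j * Fm k l : A) : B) = f i j * f k l := rfl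
    rw [this, hmul i j k l, apply_ite (Subtype.val (p := fun x => x ∈ A))]
    rfl
  have hstar' : ∀ i j, star (Fm i j) = Fm j i := by
    intro i j
    apply Subtype.ext
    have : ((star (Fm i j) : A) : B) = star (f i j) := rfl
    rw [this, hstarf]
  refine ⟨{ toFun := fun M => ∑ a : Fin p, ∑ b : Fin p, M a b • Fm a b,
            map_smul' := ?_, map_zero' := ?_, map_add' := ?_, map_mul' := ?_,
            map_star' := ?_ }, ?_⟩
  · intro c M
    simp only [Matrix.smul_apply, smul_eq_mul, mul_smul, Finset.smul_sum,
      MonoidHom.id_apply, RingHom.id_apply]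
  · simp
  · intro M M'
    simp only [Matrix.add_apply, add_smul, Finset.sum_add_distrib]
  · intro M M'
    show (∑ a : Fin p, ∑ b : Fin p, (M * M') a b • Fm a b) = (∑ a : Fin p, ∑ b : Fin p, M a b • Fm a b) * (∑ a : Fin p, ∑ b : Fin p, M' a b • Fm a b)
    have hL : ∑ a : Fin p, ∑ b : Fin p, (M * M') a b • Fm a b
        = ∑ a : Fin p, ∑ d : Fin p, ∑ b : Fin p, (M a b * M' b d) • Fm a d := by
      simp only [Matrix.mul_apply, Finset.sum_smul]
    rw [hL]
    rw [Finset.sum_mul]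
    apply Finset.sum_congr rfl
    intro a _
    rw [Finset.sum_mul]
    have hR : ∀ b : Fin p, (M a b • Fm a b) * (∑ c : Fin p, ∑ d : Fin p, M' c d • Fm c d)
        = ∑ d : Fin p, (M a b * M' b d) • Fm a d := by
      intro b
      rw [Finset.mul_sum]
      have h1 : ∀ c : Fin p, (M a b • Fm a b) * (∑ d : Fin p, M' c d • Fm c d)
          = ∑ d : Fin p, (if b = c then (M a b * M' c d) • Fm a d else 0) := by
        intro c
        rw [Finset.mul_sum]
        apply Finset.sum_congr rfl
        intro d _
        rw [smul_mul_smul_comm, hmul' a b c d]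
        split_ifs with h
        · rfl
        · simp
      simp only [h1]
      rw [Finset.sum_comm]
      apply Finset.sum_congr rfl
      intro d _
      simp
    rw [Finset.sum_congr rfl (fun b _ => hR b), Finset.sum_comm]
  · intro M
    show (∑ a : Fin p, ∑ b : Fin p, (star M) a b • Fm a b) = star (∑ a : Fin p, ∑ b : Fin p, M a b • Fm a b)
    have h1 : star (∑ a : Fin p, ∑ b : Fin p, M a b • Fm a b)
        = ∑ a : Fin p, ∑ b : Fin p, star (M a b) • Fm b a := by
      rw [star_sum]
      apply Finset.sum_congr rfl
      intro a _
      rw [star_sum]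
      apply Finset.sum_congr rfl
      intro b _
      rw [star_smul, hstar' a b]
    rw [h1]
    simp only [Matrix.star_apply]
    exact Finset.sum_comm
  · intro i j
    show ((∑ a : Fin p, ∑ b : Fin p, (Matrix.single i j (1:F)) a b • Fm a b : A) : B)
      = f i j
    have : (∑ a : Fin p, ∑ b : Fin p, (Matrix.single i j (1:F)) a b • Fm a b)
        = Fm i j := by
      rw [Finset.sum_eq_single i]
      · rw [Finset.sum_eq_single j]
        · simp [Matrix.single]
        · intro b _ hb
          simp [Matrix.single, hb.symm]
        · simp
      · intro a _ ha
        apply Finset.sum_eq_zero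
        intro b _
        simp [Matrix.single, ha.symm]
      · simp
    rw [this]
end Psi




section Main
variable {F : Type} [Field F] [StarRing F]
variable {B : Type} [Ring B] [Algebra F B] [StarRing B] [StarModule F B]
variable {N : B → ℝ}
variable {A : StarSubalgebra F B}

set_option maxHeartbeats 1600000 in
lemma main_construction {p : ℕ} (hp : 0 < p)
    (hN : IsPseudoRankFunction N)
    (hstarN : ∀ b : B, N (star b) = N b)
    (hreg : ∀ x ∈ A, ∃ y ∈ A, x = x * y * x)
    (hproper : ∀ x ∈ A, star x * x = 0 → x = 0)
    (ε : ℝ) (hε : 0 < ε)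
    (q : Fin p → Fin p → B)
    (hqmul : ∀ i j k l : Fin p, q i j * q k l = if j = k then q i l else 0)
    (hqstar : ∀ i j : Fin p, star (q i j) = q j i)
    (happrox : ∀ i j : Fin p, ∃ a ∈ A, N (q i j - a) ≤ ε) :
    ∃ f : Fin p → Fin p → B, (∀ i j, f i j ∈ A) ∧
      (∀ i j k l : Fin p, f i j * f k l = if j = k then f i l else 0) ∧
      (∀ i j : Fin p, star (f i j) = f j i) ∧
      (∀ i j : Fin p, N (q i j - f i j) ≤
        (2 * (2 ^ p * (6 * 7 ^ p + 4 * (17 * (2 * (6 * 7 ^ p) + 1))))) * ε) := by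
  classical
  set Λ : ℝ := 6 * 7 ^ p with hΛdef
  set γ : ℝ := 2 * Λ + 1 with hγdef
  set β : ℝ := 17 * γ with hβdef
  have hΛ0 : (0:ℝ) ≤ Λ := by positivity
  have hγ0 : (0:ℝ) ≤ γ := by positivity
  have hβ0 : (0:ℝ) ≤ β := by positivity
  have hε0 : (0:ℝ) ≤ ε := le_of_lt hε
  have hqproj : ∀ i : Fin p, IsProjection (q i i) := by
    intro i
    refine ⟨hqstar i i, ?_⟩
    rw [hqmul]; simp
  have horth : ∀ i j : Fin p, i ≠ j → q i i * q j j = 0 := by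
    intro i j h
    rw [hqmul]; simp [h]
  -- Step 1: pairwise orthogonal projections approximating the diagonal matrix units
  have ORTH : ∀ m : ℕ, m ≤ p → ∃ f : Fin p → B,
      (∀ j : Fin p, (j:ℕ) < m → f j ∈ A ∧ IsProjection (f j) ∧ N (q j j - f j) ≤ Λ * ε) ∧
      (∀ j k : Fin p, (j:ℕ) < m → (k:ℕ) < m → j ≠ k → f j * f k = 0) ∧
      N ((∑ k ∈ Finset.univ.filter (fun k : Fin p => (k:ℕ) < m), f k) -
         (∑ k ∈ Finset.univ.filter (fun k : Fin p => (k:ℕ) < m), q k k)) ≤ (7 ^ m - 1) * ε := by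
    intro m
    induction m with
    | zero =>
      intro _
      refine ⟨fun _ => 0, by omega, by omega, ?_⟩
      have hS : Finset.univ.filter (fun k : Fin p => (k:ℕ) < 0) = ∅ := by
        apply Finset.filter_false_of_mem; intro k _; omega
      rw [hS]
      simp [N_zero' hN]
    | succ m ih =>
      intro hm1
      obtain ⟨f, hfprop, hforth, hfsum⟩ := ih (by omega)
      have hmp : m < p := Nat.lt_of_succ_le hm1
      set jm : Fin p := ⟨m, hmp⟩ with hjmdef
      set S : Finset (Fin p) := Finset.univ.filter (fun k : Fin p => (k:ℕ) < m) with hSdef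
      have hjmS : jm ∉ S := by simp [hSdef, hjmdef]
      have hmemS : ∀ k : Fin p, k ∈ S ↔ (k:ℕ) < m := by
        intro k; simp [hSdef]
      set P : B := ∑ k ∈ S, f k with hPdef
      set Q : B := ∑ k ∈ S, q k k with hQdef
      have hPA : P ∈ A := by
        rw [hPdef]; exact sum_mem (fun k hk => (hfprop k ((hmemS k).mp hk)).1)
      have hPstar : star P = P := by
        rw [hPdef, star_sum]
        exact Finset.sum_congr rfl (fun k hk => (hfprop k ((hmemS k).mp hk)).2.1.1)
      have hfP : ∀ k ∈ S, f k * P = f k := by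
        intro k hk
        rw [hPdef, Finset.mul_sum]
        rw [Finset.sum_eq_single k]
        · exact (hfprop k ((hmemS k).mp hk)).2.1.2
        · intro k' hk' hne
          exact hforth k k' ((hmemS k).mp hk) ((hmemS k').mp hk') (Ne.symm hne)
        · intro h; exact absurd hk h
      -- the approximant of the next diagonal unit
      obtain ⟨a, haA, ha⟩ := happrox jm jm
      set X : B := q jm jm with hXdef
      have hXstar : star X = X := hqstar jm jm
      have hXX : X * X = X := (hqproj jm).2
      set b0 : B := a * star a with hb0def
      have hb0A : b0 ∈ A := mul_mem haA (star_mem haA)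
      have hb0star : star b0 = b0 := by rw [hb0def, star_mul, star_star]
      have hb0 : N (X - b0) ≤ 2 * ε := by
        have hid : X * X - b0 = (X - a) * star a + X * (X - star a) := by
          rw [hb0def]; noncomm_ring
        rw [hXX] at hid
        have h1 : N (X - b0) ≤ N ((X - a) * star a) + N (X * (X - star a)) := by
          rw [hid]; exact hN.subadditive _ _
        have h2 : N ((X - a) * star a) ≤ N (X - a) := hN.mul_le_left _ _
        have h3 : N (X * (X - star a)) ≤ N (X - star a) := hN.mul_le_right _ _
        have h4 : X - star a = star (X - a) := by rw [star_sub, hXstar]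
        rw [h4] at h1
        have h3' : N (X * star (X - a)) ≤ N (star (X - a)) := hN.mul_le_right _ _
        rw [hstarN] at h3'
        linarith
      set b : B := b0 - P * b0 - b0 * P + P * (b0 * P) with hbdef
      have hbA : b ∈ A := by
        rw [hbdef]
        exact add_mem (sub_mem (sub_mem hb0A (mul_mem hPA hb0A)) (mul_mem hb0A hPA))
          (mul_mem hPA (mul_mem hb0A hPA))
      have hbform : b = (1 - P) * (b0 * (1 - P)) := by rw [hbdef]; noncomm_ring
      have hbstar : star b = b := by
        rw [hbdef]
        simp only [star_add, star_sub, star_mul, hPstar, hb0star]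
        noncomm_ring
      obtain ⟨g, μ, hgA, hμA, hμstar, hgproj, hgb, hbg, hgform, hNg, -⟩ :=
        support_lemma hN hreg hproper b hbA hbstar
      -- orthogonality of g to the old projections
      have hgorth : ∀ k ∈ S, f k * g = 0 ∧ g * f k = 0 := by
        intro k hk
        have hfkb : f k * b = 0 := by
          have h1 : f k * b = (f k - f k * P) * (b0 - b0 * P) := by
            rw [hbdef]; noncomm_ring
          rw [h1, hfP k hk, sub_self, zero_mul]
        have h2 : f k * g = 0 := by
          calc f k * g = ((f k * b) * μ) * b := by rw [hgform]; noncomm_ring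
            _ = 0 := by rw [hfkb, zero_mul, zero_mul]
        refine ⟨h2, ?_⟩
        have h3 := congrArg star h2
        rwa [star_mul, hgproj.1, (hfprop k ((hmemS k).mp hk)).2.1.1, star_zero] at h3
      -- rank estimate for the new projection
      have hQX : Q * X = 0 := by
        rw [hQdef, Finset.sum_mul]
        apply Finset.sum_eq_zero
        intro k hk
        apply horth
        intro hkk
        rw [hkk] at hk
        exact hjmS hk
      have hXQ : X * Q = 0 := by
        rw [hQdef, Finset.mul_sum]
        apply Finset.sum_eq_zero
        intro k hk
        apply horth
        intro hkk
        rw [← hkk] at hk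
        exact hjmS hk
      have hPQ : N (P - Q) ≤ (7 ^ m - 1) * ε := hfsum
      have hXb : N (X - b) ≤ 2 * ((7 ^ m - 1) * ε) + 2 * ε := by
        have k0 : X * (1 - Q) = X := by rw [mul_sub, mul_one, hXQ, sub_zero]
        have k1 : (1 - Q) * (X * (1 - Q)) = X := by
          rw [k0, sub_mul, one_mul, hQX, sub_zero]
        have k3 : (1 - Q) * (X * (1 - Q)) - (1 - P) * (b0 * (1 - P)) =
            (P - Q) * (X * (1 - Q)) + (1 - P) * ((X - b0) * (1 - Q)) +
            ((1 - P) * b0) * (P - Q) := by noncomm_ring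
        have k2 : X - b = (P - Q) * (X * (1 - Q)) + (1 - P) * ((X - b0) * (1 - Q)) +
            ((1 - P) * b0) * (P - Q) := by
          rw [← k3, k1, hbform]
        have n1 : N ((P - Q) * (X * (1 - Q))) ≤ N (P - Q) := hN.mul_le_left _ _
        have n2 : N ((1 - P) * ((X - b0) * (1 - Q))) ≤ N (X - b0) := by
          have := hN.mul_le_right (1 - P) ((X - b0) * (1 - Q))
          have h2 := hN.mul_le_left (X - b0) (1 - Q)
          linarith
        have n3 : N (((1 - P) * b0) * (P - Q)) ≤ N (P - Q) := hN.mul_le_right _ _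
        have n4 : N (X - b) ≤ N ((P - Q) * (X * (1 - Q))) +
            N ((1 - P) * ((X - b0) * (1 - Q))) + N (((1 - P) * b0) * (P - Q)) := by
          rw [k2]; exact N_add3' hN _ _ _
        have := hPQ
        linarith
      have hXgsharp : N (X - g) ≤ 6 * 7 ^ m * ε := by
        have h1 := proj_approx hN X b g μ hXX hbg hgform
        have h3 : (0:ℝ) ≤ N (X - b) := hN.nonneg _
        nlinarith [hXb]
      have hXg : N (X - g) ≤ Λ * ε := by
        have h7 : (7:ℝ) ^ m ≤ 7 ^ p := pow_le_pow_right₀ (by norm_num) (le_of_lt hmp)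
        rw [hΛdef]
        nlinarith
      -- assemble
      refine ⟨Function.update f jm g, ?_, ?_, ?_⟩
      · intro j hj
        rcases Nat.lt_succ_iff_lt_or_eq.mp hj with hj' | hj'
        · have hne : j ≠ jm := by
            intro hh; rw [hh, hjmdef] at hj'; exact absurd hj' (by simp)
          rw [Function.update_of_ne hne]
          exact hfprop j hj'
        · have heq : j = jm := by
            apply Fin.ext; rw [hj', hjmdef]
          rw [heq, Function.update_self]
          exact ⟨hgA, hgproj, hXg⟩
      · intro j k hj hk hjk
        rcases Nat.lt_succ_iff_lt_or_eq.mp hj with hj' | hj' <;>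
          rcases Nat.lt_succ_iff_lt_or_eq.mp hk with hk' | hk'
        · have hnej : j ≠ jm := by intro hh; rw [hh, hjmdef] at hj'; exact absurd hj' (by simp)
          have hnek : k ≠ jm := by intro hh; rw [hh, hjmdef] at hk'; exact absurd hk' (by simp)
          rw [Function.update_of_ne hnej, Function.update_of_ne hnek]
          exact hforth j k hj' hk' hjk
        · have hnej : j ≠ jm := by intro hh; rw [hh, hjmdef] at hj'; exact absurd hj' (by simp)
          have heqk : k = jm := by apply Fin.ext; rw [hk', hjmdef]
          rw [Function.update_of_ne hnej, heqk, Function.update_self]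
          exact (hgorth j ((hmemS j).mpr hj')).1
        · have heqj : j = jm := by apply Fin.ext; rw [hj', hjmdef]
          have hnek : k ≠ jm := by intro hh; rw [hh, hjmdef] at hk'; exact absurd hk' (by simp)
          rw [Function.update_of_ne hnek, heqj, Function.update_self]
          exact (hgorth k ((hmemS k).mpr hk')).2
        · exfalso; apply hjk; apply Fin.ext; rw [hj', hk']
      · have hS1 : Finset.univ.filter (fun k : Fin p => (k:ℕ) < m + 1) = insert jm S := by
          ext k
          simp only [Finset.mem_filter, Finset.mem_univ, true_and, Finset.mem_insert, hmemS]
          constructor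
          · intro h
            rcases Nat.lt_succ_iff_lt_or_eq.mp h with h' | h'
            · exact Or.inr h'
            · exact Or.inl (by apply Fin.ext; rw [h', hjmdef])
          · intro h
            rcases h with h' | h'
            · rw [h']
              have hh : (jm:ℕ) = m := rfl
              omega
            · omega
        rw [hS1, Finset.sum_insert hjmS, Finset.sum_insert hjmS]
        rw [Function.update_self]
        have hcong : ∑ k ∈ S, Function.update f jm g k = ∑ k ∈ S, f k := by
          apply Finset.sum_congr rfl
          intro k hk
          have hne : k ≠ jm := by intro hh; rw [hh] at hk; exact hjmS hk
          rw [Function.update_of_ne hne]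
        rw [hcong]
        have hid : (g + ∑ k ∈ S, f k) - (q jm jm + ∑ k ∈ S, q k k) =
            (g - X) + (P - Q) := by
          rw [hXdef, hPdef, hQdef]; abel
        rw [hid]
        have n1 : N ((g - X) + (P - Q)) ≤ N (g - X) + N (P - Q) := hN.subadditive _ _
        have hPQ' : N (P - Q) ≤ (7 ^ m - 1) * ε := hfsum
        have n2 : N (g - X) = N (X - g) := N_sub_rev' hN _ _
        have harith : 6 * 7 ^ m * ε + (7 ^ m - 1) * ε ≤ ((7:ℝ) ^ (m+1) - 1) * ε := by
          rw [pow_succ]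
          exact le_of_eq (by ring)
        linarith [hXgsharp]
  obtain ⟨f, hfp, hforth0, -⟩ := ORTH p le_rfl
  have hfprop : ∀ j : Fin p, f j ∈ A ∧ IsProjection (f j) ∧ N (q j j - f j) ≤ Λ * ε :=
    fun j => hfp j j.isLt
  have hforth : ∀ j k : Fin p, j ≠ k → f j * f k = 0 :=
    fun j k h => hforth0 j k j.isLt k.isLt h
  set j0 : Fin p := ⟨0, hp⟩ with hj0def
  -- Step 2: partial isometries
  have HW : ∀ j : Fin p, ∃ w : B, j ≠ j0 → (w ∈ A ∧ w * star w * w = w ∧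
      w * f j = w ∧ f j0 * w = w ∧ N (q j0 j - w) ≤ β * ε) := by
    intro j
    by_cases hj : j = j0
    · exact ⟨0, fun h => absurd hj h⟩
    obtain ⟨a, haA, ha⟩ := happrox j0 j
    set c : B := f j0 * a * f j with hcdef
    have hcA : c ∈ A := mul_mem (mul_mem (hfprop j0).1 haA) (hfprop j).1
    have hq1 : q j0 j * (star (q j0 j) * q j0 j) = q j0 j := by
      rw [hqstar j0 j, hqmul j j0 j0 j, if_pos rfl, hqmul j0 j j j, if_pos rfl]
    have hc : N (q j0 j - c) ≤ γ * ε := by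
      have key : q j0 j0 * (q j0 j * q j j) - c = (q j0 j0 - f j0) * (q j0 j * q j j)
          + f j0 * ((q j0 j - a) * (q j j)) + (f j0 * a) * ((q j j) - f j) := by
        rw [hcdef]; noncomm_ring
      rw [hqmul j0 j j j, if_pos rfl, hqmul j0 j0 j0 j, if_pos rfl] at key
      have n0 : N (q j0 j - c) ≤ N ((q j0 j0 - f j0) * q j0 j) +
          N (f j0 * ((q j0 j - a) * q j j)) + N ((f j0 * a) * (q j j - f j)) := by
        rw [key]; exact N_add3' hN _ _ _
      have n1 : N ((q j0 j0 - f j0) * q j0 j) ≤ Λ * ε := by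
        have := hN.mul_le_left (q j0 j0 - f j0) (q j0 j)
        have := (hfprop j0).2.2
        linarith
      have n2 : N (f j0 * ((q j0 j - a) * q j j)) ≤ ε := by
        have h1 := hN.mul_le_right (f j0) ((q j0 j - a) * q j j)
        have h2 := hN.mul_le_left (q j0 j - a) (q j j)
        linarith
      have n3 : N ((f j0 * a) * (q j j - f j)) ≤ Λ * ε := by
        have := hN.mul_le_right (f j0 * a) (q j j - f j)
        have := (hfprop j).2.2
        linarith
      rw [hγdef]
      linarith
    obtain ⟨w, P, hwA, hPA2, hPproj, hswP, hwform, hcorner, hest⟩ :=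
      pisom_lemma hN hstarN hreg hproper (q j0 j) c hcA hq1
    have hcfj : c * f j = c := by
      have h1 : c * f j = (f j0 * a) * (f j * f j) := by rw [hcdef]; noncomm_ring
      rw [h1, (hfprop j).2.1.2, ← hcdef]
    obtain ⟨hPf, hfP2⟩ := hcorner (f j) (hfprop j).2.1 hcfj
    refine ⟨w, fun _ => ⟨hwA, ?_, ?_, ?_, ?_⟩⟩
    · calc w * star w * w = w * (star w * w) := by rw [mul_assoc]
        _ = c * (P * P) := by rw [hswP, hwform]; noncomm_ring
        _ = w := by rw [hPproj.2, ← hwform]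
    · calc w * f j = c * (P * f j) := by rw [hwform]; noncomm_ring
        _ = w := by rw [hPf, ← hwform]
    · have hf0c : f j0 * c = c := by
        have h1 : f j0 * c = (f j0 * f j0) * (a * f j) := by rw [hcdef]; noncomm_ring
        rw [h1, (hfprop j0).2.1.2, ← mul_assoc, ← hcdef]
      calc f j0 * w = (f j0 * c) * P := by rw [hwform]; noncomm_ring
        _ = w := by rw [hf0c, ← hwform]
    · calc N (q j0 j - w) ≤ 17 * N (q j0 j - c) := hest
        _ ≤ 17 * (γ * ε) := by linarith
        _ = β * ε := by rw [hβdef]; ring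
  choose W hW using HW
  set E : Fin p → B := fun j => W j * star (W j) with hEdef
  have hEapp : ∀ j : Fin p, E j = W j * star (W j) := fun _ => rfl
  have hEfacts : ∀ j : Fin p, j ≠ j0 → (E j ∈ A ∧ IsProjection (E j) ∧
      f j0 * E j = E j ∧ E j * f j0 = E j ∧ N (q j0 j0 - E j) ≤ 2 * (β * ε)) := by
    intro j hj
    obtain ⟨hwA, hpart, hwf, hf0w, hest⟩ := hW j hj
    have hEA : E j ∈ A := by rw [hEapp]; exact mul_mem hwA (star_mem hwA)
    have hEstar : star (E j) = E j := by
      rw [hEapp, star_mul, star_star]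
    have hEidem : E j * E j = E j := by
      rw [hEapp]
      calc (W j * star (W j)) * (W j * star (W j))
          = (W j * star (W j) * W j) * star (W j) := by noncomm_ring
        _ = W j * star (W j) := by rw [hpart]
    have hf0E : f j0 * E j = E j := by
      rw [hEapp]
      calc f j0 * (W j * star (W j)) = (f j0 * W j) * star (W j) := by rw [← mul_assoc]
        _ = W j * star (W j) := by rw [hf0w]
    have hEf0 : E j * f j0 = E j := by
      have h := congrArg star hf0E
      rwa [star_mul, hEstar, (hfprop j0).2.1.1] at h
    refine ⟨hEA, ⟨hEstar, hEidem⟩, hf0E, hEf0, ?_⟩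
    have key : q j0 j * q j j0 - E j =
        (q j0 j - W j) * (q j j0) + W j * (q j j0 - star (W j)) := by
      rw [hEapp]; noncomm_ring
    rw [hqmul j0 j j j0, if_pos rfl] at key
    have n0 : N (q j0 j0 - E j) ≤ N ((q j0 j - W j) * q j j0) +
        N (W j * (q j j0 - star (W j))) := by
      rw [key]; exact hN.subadditive _ _
    have n1 : N ((q j0 j - W j) * q j j0) ≤ β * ε := by
      have := hN.mul_le_left (q j0 j - W j) (q j j0)
      linarith
    have n2 : N (W j * (q j j0 - star (W j))) ≤ β * ε := by
      have h2 : q j j0 - star (W j) = star (q j0 j - W j) := by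
        rw [star_sub, hqstar]
      rw [h2]
      calc N (W j * star (q j0 j - W j)) ≤ N (star (q j0 j - W j)) := hN.mul_le_right _ _
        _ = N (q j0 j - W j) := hstarN _
        _ ≤ β * ε := hest
    linarith
  -- Step 3: the meet
  have MEET : ∀ m : ℕ, m ≤ p → ∃ e : B, e ∈ A ∧ IsProjection e ∧
      f j0 * e = e ∧ e * f j0 = e ∧
      (∀ j : Fin p, j ≠ j0 → (j:ℕ) < m → e * E j = e ∧ E j * e = e) ∧
      N (q j0 j0 - e) ≤ (2 ^ m * (Λ + 4 * β) - 4 * β) * ε := by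
    intro m
    induction m with
    | zero =>
      intro _
      refine ⟨f j0, (hfprop j0).1, (hfprop j0).2.1, (hfprop j0).2.1.2,
        (hfprop j0).2.1.2, by omega, ?_⟩
      have hh : ((2:ℝ) ^ 0 * (Λ + 4 * β) - 4 * β) = Λ := by norm_num
      rw [hh]
      exact (hfprop j0).2.2
    | succ m ih =>
      intro hm1
      obtain ⟨e, heA, heproj, hf0e, hef0, hecond, hebound⟩ := ih (by omega)
      have hmp : m < p := by omega
      set jm : Fin p := ⟨m, hmp⟩ with hjmdef
      have hmono : ((2:ℝ) ^ m * (Λ + 4 * β) - 4 * β) * ε ≤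
          ((2:ℝ) ^ (m+1) * (Λ + 4 * β) - 4 * β) * ε := by
        have h2 : (2:ℝ) ^ m ≤ 2 ^ (m+1) := by
          apply pow_le_pow_right₀ (by norm_num) (by omega)
        have h3 : (0:ℝ) ≤ Λ + 4 * β := by positivity
        have h4 : (2:ℝ) ^ m * (Λ + 4 * β) ≤ 2 ^ (m+1) * (Λ + 4 * β) :=
          mul_le_mul_of_nonneg_right h2 h3
        have h5 := mul_le_mul_of_nonneg_right h4 hε0
        rw [sub_mul, sub_mul]
        linarith
      by_cases hjm : jm = j0
      · refine ⟨e, heA, heproj, hf0e, hef0, ?_, by linarith⟩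
        intro j hj hjlt
        have hvm : (j0:ℕ) = m := by rw [← hjm]
        have : (j:ℕ) < m := by
          rcases Nat.lt_succ_iff_lt_or_eq.mp hjlt with h' | h'
          · exact h'
          · exfalso; apply hj; apply Fin.ext; omega
        exact hecond j hj this
      · obtain ⟨hEA, hEproj, hf0E, hEf0, hENb⟩ := hEfacts jm hjm
        obtain ⟨m', hm'A, hm'proj, hm'e, hem', hm'E, hEm', hm'bound⟩ :=
          meet_lemma hN hreg hproper e (E jm) heA hEA heproj hEproj
        refine ⟨m', hm'A, hm'proj, ?_, ?_, ?_, ?_⟩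
        · calc f j0 * m' = f j0 * (e * m') := by rw [hem']
            _ = (f j0 * e) * m' := by rw [mul_assoc]
            _ = m' := by rw [hf0e, hem']
        · calc m' * f j0 = (m' * e) * f j0 := by rw [hm'e]
            _ = m' * (e * f j0) := by rw [mul_assoc]
            _ = m' := by rw [hef0, hm'e]
        · intro j hj hjlt
          rcases Nat.lt_succ_iff_lt_or_eq.mp hjlt with h' | h'
          · obtain ⟨h1, h2⟩ := hecond j hj h'
            constructor
            · calc m' * E j = (m' * e) * E j := by rw [hm'e]
                _ = m' * (e * E j) := by rw [mul_assoc]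
                _ = m' := by rw [h1, hm'e]
            · calc E j * m' = E j * (e * m') := by rw [hem']
                _ = (E j * e) * m' := by rw [← mul_assoc]
                _ = m' := by rw [h2, hem']
          · have hvm2 : (jm:ℕ) = m := rfl
            have heq : j = jm := by apply Fin.ext; omega
            rw [heq]
            exact ⟨hm'E, hEm'⟩
        · have key0 : e - e * E jm = (e - q j0 j0) * (1 - E jm) + (q j0 j0 - E jm) +
              (E jm - q j0 j0 * E jm) := by noncomm_ring
          have key2 : E jm - q j0 j0 * E jm = (E jm - q j0 j0) * E jm := by
            rw [sub_mul, hEproj.2]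
          rw [key2] at key0
          have n0 : N (e - e * E jm) ≤ N ((e - q j0 j0) * (1 - E jm)) +
              N (q j0 j0 - E jm) + N ((E jm - q j0 j0) * E jm) := by
            rw [key0]; exact N_add3' hN _ _ _
          have n1 : N ((e - q j0 j0) * (1 - E jm)) ≤ N (q j0 j0 - e) := by
            have h1 := hN.mul_le_left (e - q j0 j0) (1 - E jm)
            have h2 := N_sub_rev' hN e (q j0 j0)
            linarith
          have n2 : N ((E jm - q j0 j0) * E jm) ≤ N (q j0 j0 - E jm) := by
            have h1 := hN.mul_le_left (E jm - q j0 j0) (E jm)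
            have h2 := N_sub_rev' hN (E jm) (q j0 j0)
            linarith
          have n3 : N (q j0 j0 - m') ≤ N (q j0 j0 - e) + N (e - m') := N_tri' hN _ _ _
          have harith : (2 * ((2:ℝ) ^ m * (Λ + 4 * β) - 4 * β) + 4 * β) * ε =
              ((2:ℝ) ^ (m+1) * (Λ + 4 * β) - 4 * β) * ε := by
            rw [pow_succ]; ring
          have hENb' : N (q j0 j0 - E jm) ≤ 2 * (β * ε) := hENb
          rw [← harith]
          linarith [hm'bound, hebound, n0, n1, n2, n3]
  obtain ⟨e, heA, heproj, hf0e, hef0, hecond0, hebound⟩ := MEET p le_rfl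
  have hecond : ∀ j : Fin p, j ≠ j0 → e * E j = e ∧ E j * e = e :=
    fun j hj => hecond0 j hj j.isLt
  set w' : Fin p → B := fun j => if j = j0 then e else e * W j with hw'def
  have hw'app : ∀ j, w' j = if j = j0 then e else e * W j := fun _ => rfl
  have hw'A : ∀ j, w' j ∈ A := by
    intro j; rw [hw'app]; split_ifs with h
    · exact heA
    · exact mul_mem heA ((hW j h).1)
  have hew' : ∀ j, e * w' j = w' j := by
    intro j; rw [hw'app]; split_ifs with h
    · exact heproj.2
    · rw [← mul_assoc, heproj.2]
  have hR1 : ∀ j, w' j * star (w' j) = e := by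
    intro j; rw [hw'app]; split_ifs with h
    · rw [heproj.1, heproj.2]
    · rw [star_mul, heproj.1]
      calc (e * W j) * (star (W j) * e) = e * (W j * star (W j)) * e := by noncomm_ring
        _ = (e * E j) * e := by rw [hEapp]
        _ = e := by rw [(hecond j h).1, heproj.2]
  have hw's : ∀ j, w' j * (star (w' j) * w' j) = w' j := by
    intro j
    calc w' j * (star (w' j) * w' j) = (w' j * star (w' j)) * w' j := by rw [← mul_assoc]
      _ = e * w' j := by rw [hR1 j]
      _ = w' j := hew' j
  have hw'f : ∀ j, j ≠ j0 → w' j * f j = w' j := by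
    intro j h
    rw [hw'app, if_neg h, mul_assoc, (hW j h).2.2.1]
  have hsf : ∀ j, j ≠ j0 → (star (w' j) * w' j) * f j = star (w' j) * w' j := by
    intro j h
    rw [mul_assoc, hw'f j h]
  have hfs : ∀ j, j ≠ j0 → f j * (star (w' j) * w' j) = star (w' j) * w' j := by
    intro j h
    have hsstar : star (star (w' j) * w' j) = star (w' j) * w' j := by
      rw [star_mul, star_star]
    have h1 := congrArg star (hsf j h)
    rwa [star_mul, (hfprop j).2.1.1, hsstar] at h1
  have hfje : ∀ j, j ≠ j0 → f j * e = 0 := by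
    intro j h
    have h1 : f j * (f j0 * e) = 0 := by rw [← mul_assoc, hforth j j0 h, zero_mul]
    rwa [hf0e] at h1
  have hse : ∀ j, j ≠ j0 → (star (w' j) * w' j) * e = 0 := by
    intro j h
    calc (star (w' j) * w' j) * e = ((star (w' j) * w' j) * f j) * e := by rw [hsf j h]
      _ = (star (w' j) * w' j) * (f j * e) := by rw [mul_assoc]
      _ = 0 := by rw [hfje j h, mul_zero]
  have hss0 : ∀ j k, j ≠ j0 → k ≠ j0 → j ≠ k →
      (star (w' j) * w' j) * (star (w' k) * w' k) = 0 := by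
    intro j k hj hk hjk
    calc (star (w' j) * w' j) * (star (w' k) * w' k)
        = ((star (w' j) * w' j) * f j) * (f k * (star (w' k) * w' k)) := by
          rw [hsf j hj, hfs k hk]
      _ = (star (w' j) * w' j) * ((f j * f k) * (star (w' k) * w' k)) := by noncomm_ring
      _ = 0 := by rw [hforth j k hjk, zero_mul, mul_zero]
  have HR : ∀ j k : Fin p, w' j * star (w' k) = if j = k then e else 0 := by
    intro j k
    by_cases hjk : j = k
    · rw [if_pos hjk, hjk, hR1]
    · rw [if_neg hjk]
      by_cases hk : k = j0
      · have hj : j ≠ j0 := by rw [← hk]; exact hjk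
        have h1 : star (w' k) = e := by rw [hk, hw'app, if_pos rfl, heproj.1]
        rw [h1]
        calc w' j * e = (w' j * (star (w' j) * w' j)) * e := by rw [hw's j]
          _ = w' j * ((star (w' j) * w' j) * e) := by rw [mul_assoc]
          _ = 0 := by rw [hse j hj, mul_zero]
      · by_cases hj : j = j0
        · have h2 : w' k * e = 0 := by
            calc w' k * e = (w' k * (star (w' k) * w' k)) * e := by rw [hw's k]
              _ = w' k * ((star (w' k) * w' k) * e) := by rw [mul_assoc]
              _ = 0 := by rw [hse k hk, mul_zero]
          have h3 := congrArg star h2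
          rw [star_mul, heproj.1, star_zero] at h3
          have h4 : w' j = e := by rw [hj, hw'app, if_pos rfl]
          rw [h4]
          exact h3
        · have hsstar : star (star (w' k) * w' k) = star (w' k) * w' k := by
            rw [star_mul, star_star]
          have h4 : (star (w' k) * w' k) * star (w' k) = star (w' k) := by
            calc (star (w' k) * w' k) * star (w' k)
                = star (w' k * (star (w' k) * w' k)) := by rw [star_mul, hsstar]
              _ = star (w' k) := by rw [hw's k]
          calc w' j * star (w' k)
              = (w' j * (star (w' j) * w' j)) * ((star (w' k) * w' k) * star (w' k)) := by
                rw [hw's j, h4]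
            _ = w' j * (((star (w' j) * w' j) * (star (w' k) * w' k)) * star (w' k)) := by
                noncomm_ring
            _ = 0 := by rw [hss0 j k hj hk hjk, zero_mul, mul_zero]
  have hδ : ∀ j : Fin p, N (q j0 j - w' j) ≤ ((2:ℝ) ^ p * (Λ + 4 * β) - 4 * β + β) * ε := by
    intro j
    have hβε : (0:ℝ) ≤ β * ε := mul_nonneg hβ0 hε0
    have expand : ((2:ℝ) ^ p * (Λ + 4 * β) - 4 * β + β) * ε =
        ((2:ℝ) ^ p * (Λ + 4 * β) - 4 * β) * ε + β * ε := by ring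
    rw [hw'app]; split_ifs with h
    · rw [h, expand]
      linarith [hebound]
    · obtain ⟨hwA, hpart, hwf, hf0w, hest⟩ := hW j h
      have key : q j0 j0 * q j0 j - e * W j =
          (q j0 j0 - e) * q j0 j + e * (q j0 j - W j) := by noncomm_ring
      rw [hqmul j0 j0 j0 j, if_pos rfl] at key
      have n0 : N (q j0 j - e * W j) ≤ N ((q j0 j0 - e) * q j0 j) +
          N (e * (q j0 j - W j)) := by
        rw [key]; exact hN.subadditive _ _
      have n1 := hN.mul_le_left (q j0 j0 - e) (q j0 j)
      have n2 := hN.mul_le_right e (q j0 j - W j)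
      rw [expand]
      linarith [hebound, hest]
  refine ⟨fun i j => star (w' i) * w' j, ?_, ?_, ?_, ?_⟩
  · intro i j; exact mul_mem (star_mem (hw'A i)) (hw'A j)
  · intro i j k l
    calc (star (w' i) * w' j) * (star (w' k) * w' l)
        = star (w' i) * ((w' j * star (w' k)) * w' l) := by noncomm_ring
      _ = star (w' i) * ((if j = k then e else 0) * w' l) := by rw [HR j k]
      _ = if j = k then star (w' i) * w' l else 0 := by
          split_ifs with h
          · rw [hew' l]
          · rw [zero_mul, mul_zero]
  · intro i j; rw [star_mul, star_star]
  · intro i j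
    have hq_ij : q i j0 * q j0 j = q i j := by rw [hqmul i j0 j0 j, if_pos rfl]
    have key : q i j0 * q j0 j - star (w' i) * w' j =
        star (q j0 i - w' i) * q j0 j + star (w' i) * (q j0 j - w' j) := by
      rw [star_sub, hqstar]; noncomm_ring
    rw [hq_ij] at key
    have n0 : N (q i j - star (w' i) * w' j) ≤
        N (star (q j0 i - w' i) * q j0 j) + N (star (w' i) * (q j0 j - w' j)) := by
      rw [key]; exact hN.subadditive _ _
    have n1 : N (star (q j0 i - w' i) * q j0 j) ≤ ((2:ℝ) ^ p * (Λ + 4 * β) - 4 * β + β) * ε := by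
      have h1 := hN.mul_le_left (star (q j0 i - w' i)) (q j0 j)
      rw [hstarN] at h1
      linarith [hδ i]
    have n2 : N (star (w' i) * (q j0 j - w' j)) ≤ ((2:ℝ) ^ p * (Λ + 4 * β) - 4 * β + β) * ε := by
      have h1 := hN.mul_le_right (star (w' i)) (q j0 j - w' j)
      linarith [hδ j]
    have hβε : (0:ℝ) ≤ β * ε := mul_nonneg hβ0 hε0
    have hx : Λ + 4 * β = 6 * 7 ^ p + 4 * (17 * (2 * (6 * 7 ^ p) + 1)) := by
      rw [hβdef, hγdef, hΛdef]
    have hfinal : ((2:ℝ) ^ p * (Λ + 4 * β) - 4 * β + β) * ε +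
        ((2:ℝ) ^ p * (Λ + 4 * β) - 4 * β + β) * ε ≤
        (2 * ((2:ℝ) ^ p * (6 * 7 ^ p + 4 * (17 * (2 * (6 * 7 ^ p) + 1))))) * ε := by
      rw [← hx]
      have hexp : ((2:ℝ) ^ p * (Λ + 4 * β) - 4 * β + β) * ε +
          ((2:ℝ) ^ p * (Λ + 4 * β) - 4 * β + β) * ε =
          (2 * ((2:ℝ) ^ p * (Λ + 4 * β))) * ε - 6 * (β * ε) := by ring
      rw [hexp]
      linarith
    linarith

end Main



/-- **Lemma 4.8** (Ara–Claramunt). For every positive integer `p` there is a constant `K*(p)`,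
depending only on `p`, with the `*`-matrix-unit approximation property. -/
theorem statement12 (p : ℕ) (hp : 0 < p) :
    ∃ c : ℝ, 0 < c ∧ StarMatrixUnitApproxProperty c p := by
  refine ⟨2 * (2 ^ p * (6 * 7 ^ p + 4 * (17 * (2 * (6 * 7 ^ p) + 1)))) + 1, by positivity, ?_⟩
  intro F _ _ B _ _ _ _ N A hN hstarN hreg hproper ε hε ρ happrox
  have hqmul : ∀ i j k l : Fin p,
      ρ (Matrix.single i j 1) * ρ (Matrix.single k l 1) =
      if j = k then ρ (Matrix.single i l 1) else 0 := by
    intro i j k l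
    rw [← map_mul]
    by_cases h : j = k
    · subst h
      rw [Matrix.single_mul_single_same, one_mul, if_pos rfl]
    · rw [Matrix.single_mul_single_of_ne (i := i) (j := j) (k := k) (h := h) (d := 1), map_zero, if_neg h]
  have hqstar : ∀ i j : Fin p,
      star (ρ (Matrix.single i j 1)) = ρ (Matrix.single j i 1) := by
    intro i j
    rw [← map_star]
    congr 1
    ext a b
    simp only [Matrix.star_apply, Matrix.single, Matrix.of_apply]
    rw [apply_ite star, star_one, star_zero]
    by_cases h1 : i = b <;> by_cases h2 : j = a <;> simp [h1, h2, and_comm]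
  have happrox' : ∀ i j : Fin p, ∃ a ∈ A,
      N (ρ (Matrix.single i j 1) - a) ≤ ε := by
    intro i j
    obtain ⟨a, haA, ha⟩ := happrox i j
    exact ⟨a, haA, le_of_lt ha⟩
  obtain ⟨f, hfA, hfmul, hfstar, hfbound⟩ :=
    main_construction hp hN hstarN hreg hproper ε hε
      (fun i j => ρ (Matrix.single i j 1)) hqmul hqstar happrox'
  obtain ⟨ψ, hψ⟩ := mk_psi f hfA hfmul hfstar
  refine ⟨ψ, ?_⟩
  intro i j
  rw [hψ i j]
  have h1 := hfbound i j
  have h2 : (2 * (2 ^ p * (6 * 7 ^ p + 4 * (17 * (2 * (6 * 7 ^ p) + 1)))) : ℝ) * ε <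
      (2 * (2 ^ p * (6 * 7 ^ p + 4 * (17 * (2 * (6 * 7 ^ p) + 1)))) + 1) * ε := by
    nlinarith
  linarith



end AraClaramunt
end
end

section
/- Let D be a division ring with center K and let B be an ultramatricial K-algebra, and set A = D tensor_K B. Then the restriction map S |-> S restricted to 1 tensor B is an affine bijection from the set P(A) of pseudo-rank functions on A onto the set P(B) of pseudo-rank functions on B (indeed a homeomorphism for the topologies of pointwise convergence). -/
open scoped TensorProduct Kronecker

noncomputable section

namespace AraClaramunt
open scoped Matrix

namespace IsPseudoRankFunction

variable {R : Type*} [Ring R] {N : R → ℝ}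

lemma map_zero (h : IsPseudoRankFunction N) : N 0 = 0 := by
  have := h.add_of_orthogonal 0 0 (by simp [IsIdempotentElem]) (by simp [IsIdempotentElem])
    (by simp) (by simp)
  simp only [add_zero] at this
  linarith

lemma comp {R' : Type*} [Ring R'] (h : IsPseudoRankFunction N) (f : R' →+* R) :
    IsPseudoRankFunction (fun x => N (f x)) := by
  refine ⟨fun x => h.nonneg _, fun x => h.le_one _, by simp [h.map_one],
    fun a b => by simpa using h.subadditive (f a) (f b),
    fun a b => by simpa using h.mul_le_left (f a) (f b),
    fun a b => by simpa using h.mul_le_right (f a) (f b),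
    fun e f' he hf hef hfe => ?_⟩
  have he' : IsIdempotentElem (f e) := by
    simpa [IsIdempotentElem, ← map_mul] using congrArg f he
  have hf' : IsIdempotentElem (f f') := by
    simpa [IsIdempotentElem, ← map_mul] using congrArg f hf
  have h1 : f e * f f' = 0 := by rw [← map_mul, hef, f.map_zero]
  have h2 : f f' * f e = 0 := by rw [← map_mul, hfe, f.map_zero]
  simpa using h.add_of_orthogonal _ _ he' hf' h1 h2

/-- Additivity on finite families of pairwise orthogonal idempotents. -/
lemma sum_orth (h : IsPseudoRankFunction N) {ι : Type*} (F : Finset ι) (g : ι → R)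
    (hidem : ∀ i ∈ F, IsIdempotentElem (g i))
    (horth : ∀ i ∈ F, ∀ j ∈ F, i ≠ j → g i * g j = 0) :
    IsIdempotentElem (∑ i ∈ F, g i) ∧ N (∑ i ∈ F, g i) = ∑ i ∈ F, N (g i) := by
  classical
  induction F using Finset.induction_on with
  | empty => simpa [IsIdempotentElem] using h.map_zero
  | @insert a s ha ih =>
    have hidem' : ∀ i ∈ s, IsIdempotentElem (g i) := fun i hi => hidem i (by simp [hi])
    have horth' : ∀ i ∈ s, ∀ j ∈ s, i ≠ j → g i * g j = 0 :=
      fun i hi j hj hij => horth i (by simp [hi]) j (by simp [hj]) hij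
    obtain ⟨hsidem, hsval⟩ := ih hidem' horth'
    have hga : IsIdempotentElem (g a) := hidem a (by simp)
    have h1 : g a * (∑ i ∈ s, g i) = 0 := by
      rw [Finset.mul_sum]
      refine Finset.sum_eq_zero fun i hi => horth a (by simp) i (by simp [hi])
        (fun hh => ha (hh ▸ hi))
    have h2 : (∑ i ∈ s, g i) * g a = 0 := by
      rw [Finset.sum_mul]
      refine Finset.sum_eq_zero fun i hi => horth i (by simp [hi]) a (by simp)
        (fun hh => ha (hh ▸ hi))
    have hidem2 : IsIdempotentElem (g a + ∑ i ∈ s, g i) := by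
      unfold IsIdempotentElem
      rw [add_mul, mul_add, mul_add, hga, hsidem, h1, h2]
      abel
    rw [Finset.sum_insert ha, Finset.sum_insert ha]
    exact ⟨hidem2, by rw [h.add_of_orthogonal _ _ hga hsidem h1 h2, hsval]⟩

end IsPseudoRankFunction

/-! ### Rank of matrices over a division ring -/

section Rank

variable {E : Type*} [DivisionRing E] {n : Type*} [Fintype n] [DecidableEq n]

/-- Rank of a square matrix over a division ring: dimension of its row space. -/
def mrk (x : Matrix n n E) : ℕ := Module.finrank E (LinearMap.range x.vecMulLinear)

/-- 0/1 diagonal matrix with support `s`. -/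
def diagOf (s : Finset n) : Matrix n n E :=
  Matrix.diagonal (fun a => if a ∈ s then 1 else 0)

lemma vecMulLinear_mul (x y : Matrix n n E) :
    (x * y).vecMulLinear = y.vecMulLinear.comp x.vecMulLinear := by
  ext v j
  simp [Matrix.vecMulLinear_apply, ← Matrix.vecMul_vecMul]

lemma mrk_mul_le_left (x y : Matrix n n E) : mrk (x * y) ≤ mrk x := by
  rw [mrk, mrk, vecMulLinear_mul, LinearMap.range_comp]
  exact Submodule.finrank_map_le _ _

lemma mrk_mul_le_right (x y : Matrix n n E) : mrk (x * y) ≤ mrk y := by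
  rw [mrk, mrk, vecMulLinear_mul]
  exact Submodule.finrank_mono (LinearMap.range_comp_le_range _ _)

lemma mrk_add_le (x y : Matrix n n E) : mrk (x + y) ≤ mrk x + mrk y := by
  have hle : LinearMap.range (x + y).vecMulLinear ≤
      LinearMap.range x.vecMulLinear ⊔ LinearMap.range y.vecMulLinear := by
    rintro w ⟨v, rfl⟩
    have : (x + y).vecMulLinear v = x.vecMulLinear v + y.vecMulLinear v := by
      simp [Matrix.vecMulLinear_apply, Matrix.vecMul_add, Matrix.add_vecMul]
    rw [this]
    exact Submodule.add_mem_sup (LinearMap.mem_range_self _ _) (LinearMap.mem_range_self _ _)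
  calc mrk (x + y) ≤ Module.finrank E ↥(LinearMap.range x.vecMulLinear ⊔
        LinearMap.range y.vecMulLinear) := Submodule.finrank_mono hle
    _ ≤ mrk x + mrk y := by
        have := Submodule.finrank_sup_add_finrank_inf_eq
          (LinearMap.range x.vecMulLinear) (LinearMap.range y.vecMulLinear)
        rw [mrk, mrk]
        omega

lemma mrk_le_card (x : Matrix n n E) : mrk x ≤ Fintype.card n := by
  have := Submodule.finrank_le (LinearMap.range x.vecMulLinear)
  simpa [mrk, Module.finrank_pi] using this

end Rank

section Rank

variable {E : Type*} [DivisionRing E] {n : Type*} [Fintype n] [DecidableEq n]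

/-- extension by zero, as a linear map `(s → E) →ₗ[E] (n → E)`. -/
def extZero (s : Finset n) : ({x // x ∈ s} → E) →ₗ[E] (n → E) where
  toFun u := fun j => if h : j ∈ s then u ⟨j, h⟩ else 0
  map_add' u v := by ext j; by_cases h : j ∈ s <;> simp [h]
  map_smul' c u := by ext j; by_cases h : j ∈ s <;> simp [h]

lemma extZero_injective (s : Finset n) : Function.Injective (extZero (E := E) s) := by
  intro u v huv
  ext ⟨j, hj⟩
  have := congrFun huv j
  simpa [extZero, hj] using this

lemma range_diagOf (s : Finset n) :
    LinearMap.range (diagOf (E := E) s).vecMulLinear = LinearMap.range (extZero (E := E) s) := by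
  apply le_antisymm
  · rintro w ⟨v, rfl⟩
    refine ⟨fun j => v j, ?_⟩
    ext j
    by_cases h : j ∈ s <;>
      simp [extZero, diagOf, Matrix.vecMulLinear_apply, Matrix.vecMul_diagonal, h]
  · rintro w ⟨u, rfl⟩
    refine ⟨extZero s u, ?_⟩
    ext j
    by_cases h : j ∈ s <;>
      simp [extZero, diagOf, Matrix.vecMulLinear_apply, Matrix.vecMul_diagonal, h]

lemma mrk_diagOf (s : Finset n) : mrk (diagOf (E := E) s) = s.card := by
  rw [mrk, range_diagOf]
  rw [LinearMap.finrank_range_of_inj (extZero_injective s)]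
  simp [Module.finrank_pi, Fintype.card_coe]

lemma mrk_one : mrk (1 : Matrix n n E) = Fintype.card n := by
  have h1 : (1 : Matrix n n E) = diagOf Finset.univ := by
    simp [diagOf]
  rw [h1, mrk_diagOf]
  simp

lemma mrk_add_of_orth (e f : Matrix n n E) (he : IsIdempotentElem e) (hf : IsIdempotentElem f)
    (hef : e * f = 0) (hfe : f * e = 0) : mrk (e + f) = mrk e + mrk f := by
  classical
  have hsup : LinearMap.range (e + f).vecMulLinear =
      LinearMap.range e.vecMulLinear ⊔ LinearMap.range f.vecMulLinear := by
    apply le_antisymm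
    · rintro w ⟨v, rfl⟩
      have : (e + f).vecMulLinear v = e.vecMulLinear v + f.vecMulLinear v := by
        simp [Matrix.vecMulLinear_apply, Matrix.vecMul_add]
      rw [this]
      exact Submodule.add_mem_sup (LinearMap.mem_range_self _ _) (LinearMap.mem_range_self _ _)
    · refine sup_le ?_ ?_
      · rintro w ⟨v, rfl⟩
        refine ⟨e.vecMulLinear v, ?_⟩
        simp only [Matrix.vecMulLinear_apply]
        rw [Matrix.vecMul_vecMul]
        have : e * (e + f) = e := by rw [mul_add, he, hef, add_zero]
        rw [this]
      · rintro w ⟨v, rfl⟩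
        refine ⟨f.vecMulLinear v, ?_⟩
        simp only [Matrix.vecMulLinear_apply]
        rw [Matrix.vecMul_vecMul]
        have : f * (e + f) = f := by rw [mul_add, hf, hfe, zero_add]
        rw [this]
  have hinf : LinearMap.range e.vecMulLinear ⊓ LinearMap.range f.vecMulLinear = ⊥ := by
    rw [eq_bot_iff]
    rintro w ⟨h1, h2⟩
    obtain ⟨v, hv⟩ := h1
    obtain ⟨v', hv'⟩ := h2
    simp only [Matrix.vecMulLinear_apply] at hv hv'
    have h1 : w ᵥ* e = w := by
      rw [← hv, Matrix.vecMul_vecMul, he]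
    have h2 : w ᵥ* e = 0 := by
      rw [← hv', Matrix.vecMul_vecMul, hfe, Matrix.vecMul_zero]
    rw [Submodule.mem_bot, ← h1, h2]
  have h3 := Submodule.finrank_sup_add_finrank_inf_eq
    (LinearMap.range e.vecMulLinear) (LinearMap.range f.vecMulLinear)
  rw [hinf] at h3
  simp only [finrank_bot, add_zero] at h3
  rw [mrk, mrk, mrk, hsup]
  exact h3

end Rank

section NF

variable {E : Type*} [DivisionRing E] {n : Type*} [Fintype n] [DecidableEq n]

/-- Mutual two-sided divisibility of matrices. -/
def MEquiv (x y : Matrix n n E) : Prop :=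
  ∃ u v u' v', x = u * y * v ∧ y = u' * x * v'

lemma MEquiv.refl (x : Matrix n n E) : MEquiv x x :=
  ⟨1, 1, 1, 1, by simp, by simp⟩

lemma MEquiv.trans {x y z : Matrix n n E} (h1 : MEquiv x y) (h2 : MEquiv y z) : MEquiv x z := by
  obtain ⟨u, v, u', v', hxy, hyx⟩ := h1
  obtain ⟨p, q, p', q', hyz, hzy⟩ := h2
  exact ⟨u * p, q * v, p' * u', v' * q', by rw [hxy, hyz]; noncomm_ring,
    by rw [hzy, hyx]; noncomm_ring⟩

section Lift

variable (a : n)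

/-- Extend a matrix on the complement of `a` by the identity at `a`. -/
def lift1 (M : Matrix {c : n // c ≠ a} {c : n // c ≠ a} E) : Matrix n n E :=
  Matrix.of fun i j =>
    if hi : i = a then (if j = a then 1 else 0)
    else if hj : j = a then 0 else M ⟨i, hi⟩ ⟨j, hj⟩

lemma lift1_apply_ne (M : Matrix {c : n // c ≠ a} {c : n // c ≠ a} E) {i j : n}
    (hi : i ≠ a) (hj : j ≠ a) : lift1 a M i j = M ⟨i, hi⟩ ⟨j, hj⟩ := by
  simp [lift1, hi, hj]

lemma lift1_apply_left (M : Matrix {c : n // c ≠ a} {c : n // c ≠ a} E) (j : n) :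
    lift1 a M a j = if j = a then 1 else 0 := by simp [lift1]

lemma lift1_apply_right (M : Matrix {c : n // c ≠ a} {c : n // c ≠ a} E) {i : n}
    (hi : i ≠ a) : lift1 a M i a = 0 := by simp [lift1, hi]

lemma sum_split (f : n → E) : ∑ k, f k = f a + ∑ k : {c : n // c ≠ a}, f (k : n) := by
  classical
  rw [← Finset.sum_erase_add Finset.univ f (Finset.mem_univ a), add_comm]
  congr 1
  rw [Finset.sum_subtype (Finset.univ.erase a) (p := fun c => c ≠ a)
    (fun k => by simp [Finset.mem_erase]) f]

lemma lift1_mul (M M' : Matrix {c : n // c ≠ a} {c : n // c ≠ a} E) :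
    lift1 a M * lift1 a M' = lift1 a (M * M') := by
  classical
  ext i j
  rw [Matrix.mul_apply, sum_split a]
  by_cases hi : i = a
  · subst hi
    have h1 : lift1 i M i i = 1 := by simp [lift1]
    have h2 : ∀ k : {c : n // c ≠ i}, lift1 i M i (k : n) = 0 := fun k => by
      simp [lift1, k.2]
    rw [h1, one_mul, lift1_apply_left, lift1_apply_left]
    simp only [h2, zero_mul, Finset.sum_const_zero, add_zero]
  · by_cases hj : j = a
    · subst hj
      have h1 : lift1 j M i j = 0 := lift1_apply_right j _ hi
      have h2 : ∀ k : {c : n // c ≠ j}, lift1 j M' (k : n) j = 0 := fun k =>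
        lift1_apply_right j _ k.2
      rw [h1, zero_mul, zero_add, lift1_apply_right j _ hi]
      exact Finset.sum_eq_zero fun k _ => by rw [h2 k, mul_zero]
    · rw [lift1_apply_ne a _ hi hj, Matrix.mul_apply]
      have h1 : lift1 a M i a = 0 := lift1_apply_right a _ hi
      have h2 : ∀ k : {c : n // c ≠ a},
          lift1 a M i (k : n) * lift1 a M' (k : n) j = M ⟨i, hi⟩ k * M' k ⟨j, hj⟩ := by
        intro k
        rw [lift1_apply_ne a _ hi k.2, lift1_apply_ne a _ k.2 hj]
      simp only [h1, zero_mul, zero_add, h2]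

lemma lift1_diagOf (s' : Finset {c : n // c ≠ a}) :
    lift1 a (diagOf (E := E) s') = diagOf (insert a (s'.image Subtype.val)) := by
  classical
  ext i j
  by_cases hi : i = a
  · by_cases hj : j = a
    · rw [hi, hj, lift1_apply_left, if_pos rfl]
      simp [diagOf]
    · rw [hi, lift1_apply_left, if_neg hj]
      have : a ≠ j := fun h => hj h.symm
      simp [diagOf, Matrix.diagonal_apply_ne _ this]
  · by_cases hj : j = a
    · rw [hj, lift1_apply_right a _ hi]
      have : i ≠ a := hi
      simp [diagOf, Matrix.diagonal_apply_ne _ this]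
    · rw [lift1_apply_ne a _ hi hj]
      by_cases hij : i = j
      · subst hij
        simp only [diagOf, Matrix.diagonal_apply_eq]
        have hmem : i ∈ insert a (s'.image Subtype.val) ↔ (⟨i, hj⟩ : {c : n // c ≠ a}) ∈ s' := by
          simp only [Finset.mem_insert, Finset.mem_image]
          constructor
          · rintro (h | ⟨c, hc, rfl⟩)
            · exact absurd h hj
            · simpa [Subtype.coe_eta] using hc
          · intro h; exact Or.inr ⟨_, h, rfl⟩
        by_cases hm : (⟨i, hj⟩ : {c : n // c ≠ a}) ∈ s'
        · rw [if_pos hm, if_pos (hmem.mpr hm)]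
        · rw [if_neg hm, if_neg (fun hc => hm (hmem.mp hc))]
      · have hsub : (⟨i, hi⟩ : {c : n // c ≠ a}) ≠ ⟨j, hj⟩ := fun h =>
          hij (congrArg Subtype.val h)
        simp [diagOf, Matrix.diagonal_apply_ne _ hsub, Matrix.diagonal_apply_ne _ hij]

end Lift

theorem exists_MEquiv_diagOf_aux :
    ∀ (m : ℕ) (n : Type v) [Fintype n] [DecidableEq n], Fintype.card n ≤ m →
      ∀ x : Matrix n n E, ∃ s : Finset n, MEquiv x (diagOf s) := by
  intro m
  induction m with
  | zero =>
    intro n _ _ hcard x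
    have hemp : IsEmpty n := Fintype.card_eq_zero_iff.mp (Nat.le_zero.mp hcard)
    exact ⟨∅, 1, 1, 1, 1, by ext i j; exact (hemp.false i).elim,
      by ext i j; exact (hemp.false i).elim⟩
  | succ m ih =>
    intro n _ _ hcard x
    by_cases hx : x = 0
    · exact ⟨∅, 1, 1, 1, 1, by simp [hx, diagOf], by simp [hx, diagOf]⟩
    obtain ⟨a, b, hab⟩ : ∃ a b, x a b ≠ 0 := by
      by_contra hc; push_neg at hc; exact hx (by ext i j; simpa using hc i j)
    classical
    set α : E := x a b with hα
    set t : Matrix n n E := Matrix.of (fun i j => if j = a ∧ i ≠ a then x i b * α⁻¹ else 0)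
      with htdef
    set sM : Matrix n n E := Matrix.of (fun i j => if i = b ∧ j ≠ b then α⁻¹ * x a j else 0)
      with hsdef
    set Pm : Matrix n n E :=
      Matrix.of (fun k j => if k = Equiv.swap a b j then (if j = a then α⁻¹ else 1) else 0)
      with hPdef
    set Qm : Matrix n n E :=
      Matrix.of (fun k j => if j = Equiv.swap a b k then (if k = a then α else 1) else 0)
      with hQdef
    set y : Matrix n n E := (1 - t) * x with hydef
    set z : Matrix n n E := y * (1 - sM) with hzdef
    set w : Matrix n n E := z * Pm with hwdef
    -- nilpotency of the transvection parts
    have ht2 : t * t = 0 := by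
      ext i j
      rw [Matrix.mul_apply]
      refine Finset.sum_eq_zero fun k _ => ?_
      by_cases hk : k = a ∧ i ≠ a
      · have : t k j = 0 := by simp [htdef, hk.1]
        rw [this, mul_zero]
      · have : t i k = 0 := by simp only [htdef, Matrix.of_apply, if_neg hk]
        rw [this, zero_mul]
    have hs2 : sM * sM = 0 := by
      ext i j
      rw [Matrix.mul_apply]
      refine Finset.sum_eq_zero fun k _ => ?_
      by_cases hk : i = b ∧ k ≠ b
      · have : sM k j = 0 := by simp [hsdef, hk.2]
        rw [this, mul_zero]
      · have : sM i k = 0 := by simp only [hsdef, Matrix.of_apply, if_neg hk]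
        rw [this, zero_mul]
    -- row a of y agrees with x
    have hya : ∀ j, y a j = x a j := by
      intro j
      rw [hydef, Matrix.mul_apply]
      have h1 : ∀ k, ((1 : Matrix n n E) - t) a k = if a = k then 1 else 0 := by
        intro k
        simp [htdef, Matrix.sub_apply, Matrix.one_apply]
      simp only [h1, ite_mul, one_mul, zero_mul]
      rw [Finset.sum_ite_eq]
      simp
    -- column b of y is cleared away from the pivot row
    have hyb : ∀ i, i ≠ a → y i b = 0 := by
      intro i hi
      rw [hydef, Matrix.mul_apply]
      have h1 : ∀ k, ((1 : Matrix n n E) - t) i k * x k b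
          = (if i = k then 1 else 0) * x k b - (if k = a then x i b * α⁻¹ else 0) * x k b := by
        intro k
        simp only [Matrix.sub_apply, Matrix.one_apply, htdef, Matrix.of_apply, hi,
          ne_eq, not_false_iff, and_true, sub_mul]
      simp only [h1]
      rw [Finset.sum_sub_distrib]
      simp only [ite_mul, one_mul, zero_mul]
      rw [Finset.sum_ite_eq, Finset.sum_ite_eq']
      simp only [Finset.mem_univ, if_pos]
      rw [mul_assoc, ← hα, inv_mul_cancel₀ hab, mul_one, sub_self]
    -- entries of z
    have hz : ∀ i j, z i j = y i j - y i b * (if j = b then 0 else α⁻¹ * x a j) := by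
      intro i j
      rw [hzdef, Matrix.mul_apply]
      have h1 : ∀ k, y i k * ((1 : Matrix n n E) - sM) k j
          = y i k * (if k = j then 1 else 0)
            - (if k = b then y i k * (if j = b then 0 else α⁻¹ * x a j) else 0) := by
        intro k
        rw [Matrix.sub_apply, Matrix.one_apply, mul_sub]
        congr 1
        by_cases hk : k = b
        · by_cases hjb : j = b
          · simp [hsdef, hk, hjb]
          · simp [hsdef, hk, hjb]
        · simp [hsdef, hk]
      simp only [h1]
      rw [Finset.sum_sub_distrib]
      simp only [mul_ite, mul_one, mul_zero]
      rw [Finset.sum_ite_eq', Finset.sum_ite_eq']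
      simp
    have hzab : z a b = α := by
      rw [hz a b, if_pos rfl, mul_zero, sub_zero, hya]
    have hzaj : ∀ j, j ≠ b → z a j = 0 := by
      intro j hj
      rw [hz a j, if_neg hj, hya, hya, ← hα, ← mul_assoc, mul_inv_cancel₀ hab, one_mul, sub_self]
    have hzib : ∀ i, i ≠ a → z i b = 0 := by
      intro i hi
      rw [hz i b, if_pos rfl, mul_zero, sub_zero, hyb i hi]
    -- the permutation-with-scaling matrices are mutually inverse
    have hPQ : Pm * Qm = 1 := by
      ext i j
      rw [Matrix.mul_apply]
      have h1 : ∀ k, Pm i k * Qm k j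
          = if k = Equiv.swap a b i then
              (if j = i then (if k = a then α⁻¹ * α else 1) else 0) else 0 := by
        intro k
        by_cases hk : k = Equiv.swap a b i
        · subst hk
          simp only [hPdef, hQdef, Matrix.of_apply, Equiv.swap_apply_self]
          by_cases hj : j = i
          · by_cases hk2 : Equiv.swap a b i = a
            · simp [hj, hk2]
            · simp [hj, hk2]
          · simp [hj]
        · have hik : ¬ i = Equiv.swap a b k := by
            intro hc
            exact hk (by rw [hc, Equiv.swap_apply_self])
          simp [hPdef, Matrix.of_apply, hik, hk]
      simp only [h1]
      rw [Finset.sum_ite_eq']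
      simp only [Finset.mem_univ, if_pos]
      by_cases hj : j = i
      · subst hj
        by_cases hk2 : Equiv.swap a b j = a
        · rw [if_pos rfl, if_pos hk2, inv_mul_cancel₀ hab, Matrix.one_apply_eq]
        · rw [if_pos rfl, if_neg hk2, Matrix.one_apply_eq]
      · rw [if_neg hj, Matrix.one_apply_ne (fun hc => hj hc.symm)]
    have hQP : Qm * Pm = 1 := by
      ext i j
      rw [Matrix.mul_apply]
      have h1 : ∀ k, Qm i k * Pm k j
          = if k = Equiv.swap a b i then
              (if j = i then (if i = a then α * α⁻¹ else 1) else 0) else 0 := by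
        intro k
        by_cases hk : k = Equiv.swap a b i
        · subst hk
          simp only [hQdef, hPdef, Matrix.of_apply, Equiv.swap_apply_self,
            EmbeddingLike.apply_eq_iff_eq]
          by_cases hj : j = i
          · by_cases hk2 : i = a
            · simp [hj, hk2]
            · simp [hj, hk2]
          · have hj' : ¬ i = j := fun hc => hj hc.symm
            simp [hj, hj']
        · have hik : ¬ i = Equiv.swap a b k := by
            intro hc
            exact hk (by rw [hc, Equiv.swap_apply_self])
          simp [hQdef, Matrix.of_apply, hik, hk]
      simp only [h1]
      rw [Finset.sum_ite_eq']
      simp only [Finset.mem_univ, if_pos]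
      by_cases hj : j = i
      · subst hj
        by_cases hk2 : j = a
        · rw [if_pos rfl, if_pos hk2, mul_inv_cancel₀ hab, Matrix.one_apply_eq]
        · rw [if_pos rfl, if_neg hk2, Matrix.one_apply_eq]
      · rw [if_neg hj, Matrix.one_apply_ne (fun hc => hj hc.symm)]
    -- entries of w
    have hw : ∀ i j, w i j = z i (Equiv.swap a b j) * (if j = a then α⁻¹ else 1) := by
      intro i j
      rw [hwdef, Matrix.mul_apply]
      have h1 : ∀ k, z i k * Pm k j
          = if k = Equiv.swap a b j then z i k * (if j = a then α⁻¹ else 1) else 0 := by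
        intro k
        by_cases hk : k = Equiv.swap a b j
        · simp [hPdef, hk]
        · simp [hPdef, Matrix.of_apply, hk, mul_ite]
      simp only [h1]
      rw [Finset.sum_ite_eq']
      simp
    have hwa : ∀ i, w i a = if i = a then (1 : E) else 0 := by
      intro i
      rw [hw i a, if_pos rfl, Equiv.swap_apply_left]
      by_cases hi : i = a
      · rw [hi, hzab, if_pos rfl, mul_inv_cancel₀ hab]
      · rw [hzib i hi, zero_mul, if_neg hi]
    have hwr : ∀ j, j ≠ a → w a j = 0 := by
      intro j hj
      rw [hw a j, if_neg hj, mul_one]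
      have hsb : Equiv.swap a b j ≠ b := by
        intro hc
        apply hj
        have h5 := congrArg (Equiv.swap a b) hc
        rwa [Equiv.swap_apply_self, Equiv.swap_apply_right] at h5
      exact hzaj _ hsb
    -- x and w are mutually equivalent
    have e2 : ((1 : Matrix n n E) - sM) * (1 + sM) = 1 := by
      rw [mul_add, mul_one, sub_mul, one_mul, hs2]
      abel
    have e3 : ((1 : Matrix n n E) + t) * (1 - t) = 1 := by
      rw [mul_sub, mul_one, add_mul, one_mul, ht2]
      abel
    have hMxw : MEquiv x w := by
      refine ⟨1 + t, Qm * (1 + sM), 1 - t, (1 - sM) * Pm, ?_, ?_⟩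
      · rw [hwdef, hzdef, hydef]
        calc x = ((1 + t) * (1 - t)) * x * (((1 - sM) * (Pm * Qm)) * (1 + sM)) := by
              rw [e3, hPQ, mul_one, e2, one_mul, mul_one]
          _ = (1 + t) * ((1 - t) * x * (1 - sM) * Pm) * (Qm * (1 + sM)) := by
              noncomm_ring
      · rw [hwdef, hzdef, hydef]
        noncomm_ring
    -- w is a lifted matrix
    have hwlift : w = lift1 a (w.submatrix (Subtype.val : {c : n // c ≠ a} → n) Subtype.val) := by
      ext i j
      by_cases hi : i = a
      · rw [hi, lift1_apply_left]
        by_cases hj : j = a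
        · rw [if_pos hj, hj]
          simpa using hwa a
        · rw [if_neg hj]
          exact hwr j hj
      · by_cases hj : j = a
        · rw [hj, lift1_apply_right _ _ hi]
          simpa [hi] using hwa i
        · rw [lift1_apply_ne _ _ hi hj]
          rfl
    -- apply the induction hypothesis on the smaller index type
    have hcard' : Fintype.card {c : n // c ≠ a} ≤ m := by
      have hlt : Fintype.card {c : n // c ≠ a} < Fintype.card n :=
        Fintype.card_subtype_lt (x := a) (by simp)
      omega
    obtain ⟨s', hu, hv, hu', hv', h1, h2⟩ :=
      ih {c : n // c ≠ a} hcard' (w.submatrix (Subtype.val : {c : n // c ≠ a} → n) Subtype.val)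
    have hwd1 : w = lift1 a hu * lift1 a (diagOf s') * lift1 a hv := by
      rw [lift1_mul, lift1_mul, ← h1, ← hwlift]
    have hwd2 : lift1 a (diagOf (E := E) s') = lift1 a hu' * w * lift1 a hv' := by
      conv_rhs => rw [hwlift]
      rw [lift1_mul, lift1_mul, ← h2]
    have hMwd : MEquiv w (lift1 a (diagOf (E := E) s')) :=
      ⟨lift1 a hu, lift1 a hv, lift1 a hu', lift1 a hv', hwd1, hwd2⟩
    rw [lift1_diagOf] at hMwd
    exact ⟨insert a (s'.image Subtype.val), hMxw.trans hMwd⟩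

theorem exists_MEquiv_diagOf (x : Matrix n n E) : ∃ s : Finset n, MEquiv x (diagOf s) :=
  exists_MEquiv_diagOf_aux (Fintype.card n) n le_rfl x

end NF

section MU

variable {E : Type*} [DivisionRing E] {n : Type*} [Fintype n] [DecidableEq n]

lemma mrk_eq_of_MEquiv {x y : Matrix n n E} (h : MEquiv x y) : mrk x = mrk y := by
  obtain ⟨u, v, u', v', h1, h2⟩ := h
  refine le_antisymm ?_ ?_
  · rw [h1]; exact le_trans (mrk_mul_le_left _ _) (mrk_mul_le_right _ _)
  · rw [h2]; exact le_trans (mrk_mul_le_left _ _) (mrk_mul_le_right _ _)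

/-- A complete system of matrix units in a ring, with blocks indexed by `ι`. -/
structure MUSystem (R : Type*) [Ring R] (ι : Type*) [Fintype ι] (p : ι → ℕ) where
  E : (i : ι) → Fin (p i) → Fin (p i) → R
  mul_same : ∀ i (a b c d : Fin (p i)), E i a b * E i c d = if b = c then E i a d else 0
  mul_ne : ∀ {i j}, i ≠ j → ∀ (a b : Fin (p i)) (c d : Fin (p j)), E i a b * E j c d = 0
  sum_one : (∑ i, ∑ a, E i a a) = 1

namespace MUSystem

variable {R : Type*} [Ring R] {ι : Type*} [Fintype ι] [DecidableEq ι] {p : ι → ℕ}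
variable {D' : Type*} [DivisionRing D']

variable (U : MUSystem R ι p) (ψ : D' →+* R)
  (hcomm : ∀ (d : D') i (a b : Fin (p i)), ψ d * U.E i a b = U.E i a b * ψ d)

/-- The ring homomorphism `∏ᵢ M_{pᵢ}(D') →+* R` induced by a system of matrix units and a
commuting copy of `D'`. -/
def hom : (∀ i, Matrix (Fin (p i)) (Fin (p i)) D') →+* R where
  toFun M := ∑ i, ∑ a, ∑ b, ψ (M i a b) * U.E i a b
  map_zero' := by simp
  map_add' M M' := by
    simp only [Pi.add_apply, Matrix.add_apply, map_add, add_mul, Finset.sum_add_distrib]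
  map_one' := by
    have h1 : ∀ i (a : Fin (p i)),
        (∑ b, ψ ((1 : Matrix (Fin (p i)) (Fin (p i)) D') a b) * U.E i a b) = U.E i a a := by
      intro i a
      have h0 : ∀ b, ψ ((1 : Matrix (Fin (p i)) (Fin (p i)) D') a b) * U.E i a b
          = if a = b then U.E i a b else 0 := by
        intro b; rw [Matrix.one_apply]; by_cases hab : a = b <;> simp [hab]
      simp only [h0]
      rw [Finset.sum_ite_eq]
      simp
    simp only [Pi.one_apply, h1]
    exact U.sum_one
  map_mul' M M' := by
    have swap : ∀ (x y : D') i (a b : Fin (p i)) j (c d : Fin (p j)),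
        (ψ x * U.E i a b) * (ψ y * U.E j c d)
          = ψ x * (ψ y * (U.E i a b * U.E j c d)) := by
      intro x y i a b j c d
      rw [mul_assoc]
      congr 1
      rw [← mul_assoc, ← hcomm, mul_assoc]
    have inner : ∀ i (a b : Fin (p i)),
        (ψ (M i a b) * U.E i a b) * (∑ j, ∑ c, ∑ d, ψ (M' j c d) * U.E j c d)
          = ∑ d, ψ (M i a b * M' i b d) * U.E i a d := by
      intro i a b
      rw [Finset.mul_sum, Finset.sum_eq_single i]
      rotate_left
      · intro j _ hj
        rw [Finset.mul_sum]
        refine Finset.sum_eq_zero fun c _ => ?_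
        rw [Finset.mul_sum]
        refine Finset.sum_eq_zero fun d _ => ?_
        rw [swap, U.mul_ne (fun h => hj h.symm)]
        simp
      · intro h; exact absurd (Finset.mem_univ i) h
      rw [Finset.mul_sum, Finset.sum_eq_single b]
      rotate_left
      · intro c _ hc
        rw [Finset.mul_sum]
        refine Finset.sum_eq_zero fun d _ => ?_
        rw [swap, U.mul_same, if_neg (fun h => hc h.symm)]
        simp
      · intro h; exact absurd (Finset.mem_univ b) h
      rw [Finset.mul_sum]
      refine Finset.sum_congr rfl fun d _ => ?_
      rw [swap, U.mul_same, if_pos rfl, ← mul_assoc, ← map_mul]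
    calc (∑ i, ∑ a, ∑ b, ψ ((M * M') i a b) * U.E i a b)
        = ∑ i, ∑ a, ∑ b, ∑ d, ψ (M i a d * M' i d b) * U.E i a b := by
          refine Finset.sum_congr rfl fun i _ => Finset.sum_congr rfl fun a _ =>
            Finset.sum_congr rfl fun b _ => ?_
          rw [Pi.mul_apply, Matrix.mul_apply, map_sum, Finset.sum_mul]
      _ = ∑ i, ∑ a, ∑ d, ∑ b, ψ (M i a d * M' i d b) * U.E i a b := by
          refine Finset.sum_congr rfl fun i _ => Finset.sum_congr rfl fun a _ => ?_
          exact Finset.sum_comm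
      _ = (∑ i, ∑ a, ∑ b, ψ (M i a b) * U.E i a b)
            * (∑ i, ∑ a, ∑ b, ψ (M' i a b) * U.E i a b) := by
          rw [Finset.sum_mul]
          refine Finset.sum_congr rfl fun i _ => ?_
          rw [Finset.sum_mul]
          refine Finset.sum_congr rfl fun a _ => ?_
          rw [Finset.sum_mul]
          refine Finset.sum_congr rfl fun b _ => ?_
          rw [inner i a b]

lemma hom_apply (M : ∀ i, Matrix (Fin (p i)) (Fin (p i)) D') :
    U.hom ψ hcomm M = ∑ i, ∑ a, ∑ b, ψ (M i a b) * U.E i a b := rfl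

/-- Values of a pseudo-rank function on the "diagonal" idempotents of a block are equal. -/
lemma val_diag_eq {N : R → ℝ} (hN : IsPseudoRankFunction N) (i : ι) (a b : Fin (p i)) :
    N (U.E i a a) = N (U.E i b b) := by
  have key : ∀ (a b : Fin (p i)), N (U.E i a a) ≤ N (U.E i b b) := by
    intro a b
    have h1 : U.E i a a = U.E i a b * U.E i b a := by rw [U.mul_same, if_pos rfl]
    have h2 : U.E i a b = U.E i a b * U.E i b b := by rw [U.mul_same, if_pos rfl]
    calc N (U.E i a a) = N (U.E i a b * U.E i b a) := by rw [← h1]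
      _ ≤ N (U.E i a b) := hN.mul_le_left _ _
      _ = N (U.E i a b * U.E i b b) := by rw [← h2]
      _ ≤ N (U.E i b b) := hN.mul_le_right _ _
  exact le_antisymm (key a b) (key b a)

end MUSystem

end MU

section LemmaF

variable {R : Type*} [Ring R] {ι : Type*} [Fintype ι] [DecidableEq ι] {p : ι → ℕ}
variable {D' : Type*} [DivisionRing D']

open MUSystem in
/-- The key computation: a pseudo-rank function evaluated through a matrix-unit system is a
weighted sum of ranks. -/
theorem pseudoRank_hom (U : MUSystem R ι p) (ψ : D' →+* R)
    (hcomm : ∀ (d : D') i (a b : Fin (p i)), ψ d * U.E i a b = U.E i a b * ψ d)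
    (hp : ∀ i, 0 < p i) {N : R → ℝ} (hN : IsPseudoRankFunction N)
    (M : ∀ i, Matrix (Fin (p i)) (Fin (p i)) D') :
    N (U.hom ψ hcomm M) = ∑ i, (mrk (M i) : ℝ) * N (U.E i ⟨0, hp i⟩ ⟨0, hp i⟩) := by
  classical
  -- normal forms blockwise
  have hNF : ∀ i, ∃ s : Finset (Fin (p i)), MEquiv (M i) (diagOf s) := fun i =>
    exists_MEquiv_diagOf (M i)
  choose s hs using hNF
  set DS : ∀ i, Matrix (Fin (p i)) (Fin (p i)) D' := fun i => diagOf (s i) with hDS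
  -- global mutual divisibility
  obtain ⟨u, v, u', v', h1, h2⟩ : ∃ (u v u' v' : ∀ i, Matrix (Fin (p i)) (Fin (p i)) D'),
      M = u * DS * v ∧ DS = u' * M * v' := by
    choose u v u' v' h1 h2 using hs
    exact ⟨u, v, u', v', funext h1, funext h2⟩
  have hNeq : N (U.hom ψ hcomm M) = N (U.hom ψ hcomm DS) := by
    refine le_antisymm ?_ ?_
    · rw [h1, map_mul, map_mul]
      exact le_trans (hN.mul_le_left _ _) (hN.mul_le_right _ _)
    · conv_lhs => rw [h2]
      rw [map_mul, map_mul]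
      exact le_trans (hN.mul_le_left _ _) (hN.mul_le_right _ _)
  -- hom of the diagonal pattern is a sum of matrix units
  have hDSval : U.hom ψ hcomm DS = ∑ x ∈ (Finset.univ : Finset ι).sigma (fun i => s i),
      U.E x.1 x.2 x.2 := by
    rw [MUSystem.hom_apply, Finset.sum_sigma]
    refine Finset.sum_congr rfl fun i _ => ?_
    have h0 : ∀ a b : Fin (p i), ψ (DS i a b) * U.E i a b
        = if a = b then (if a ∈ s i then U.E i a b else 0) else 0 := by
      intro a b
      rw [hDS]
      simp only [diagOf, Matrix.diagonal_apply]
      by_cases hab : a = b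
      · by_cases hm : a ∈ s i <;> simp [hab, hm]
      · simp [hab]
    calc (∑ a, ∑ b, ψ (DS i a b) * U.E i a b)
        = ∑ a, if a ∈ s i then U.E i a a else 0 := by
          refine Finset.sum_congr rfl fun a _ => ?_
          simp only [h0]
          rw [Finset.sum_ite_eq]
          simp
      _ = ∑ a ∈ s i, U.E i a a := by
          rw [Finset.sum_ite_mem, Finset.univ_inter]
  -- orthogonal idempotent family
  have horth := hN.sum_orth ((Finset.univ : Finset ι).sigma (fun i => s i))
    (fun x : Σ i : ι, Fin (p i) => U.E x.1 x.2 x.2)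
    (fun x _ => by
      show IsIdempotentElem _
      unfold IsIdempotentElem
      rw [U.mul_same, if_pos rfl])
    (fun x _ y _ hxy => by
      rcases x with ⟨i, a⟩
      rcases y with ⟨j, b⟩
      by_cases hij : i = j
      · subst hij
        have hab : a ≠ b := fun h => hxy (by rw [h])
        rw [U.mul_same, if_neg hab]
      · exact U.mul_ne hij _ _ _ _)
  rw [hNeq, hDSval, horth.2]
  rw [Finset.sum_sigma]
  refine Finset.sum_congr rfl fun i _ => ?_
  have hval : ∀ a ∈ s i, N (U.E i a a) = N (U.E i ⟨0, hp i⟩ ⟨0, hp i⟩) := fun a _ =>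
    U.val_diag_eq hN i a ⟨0, hp i⟩
  rw [Finset.sum_congr rfl hval, Finset.sum_const]
  have hmrk : mrk (M i) = (s i).card := by
    rw [mrk_eq_of_MEquiv (hs i), mrk_diagOf]
  rw [hmrk]
  simp [nsmul_eq_mul]

open MUSystem in
/-- Injectivity of the induced homomorphism when the corner idempotents are nonzero. -/
theorem hom_injective (U : MUSystem R ι p) (ψ : D' →+* R)
    (hcomm : ∀ (d : D') i (a b : Fin (p i)), ψ d * U.E i a b = U.E i a b * ψ d)
    (hp : ∀ i, 0 < p i) (hne : ∀ i (a b : Fin (p i)), U.E i a b ≠ 0) :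
    Function.Injective (U.hom ψ hcomm) := by
  classical
  have hker : ∀ M, U.hom ψ hcomm M = 0 → M = 0 := by
    intro M hM
    funext i
    ext a b
    by_contra hMab
    have key : U.E i a a * U.hom ψ hcomm M * U.E i b b = ψ (M i a b) * U.E i a b := by
      rw [MUSystem.hom_apply]
      rw [Finset.mul_sum, Finset.sum_mul, Finset.sum_eq_single i]
      rotate_left
      · intro j _ hj
        rw [Finset.mul_sum, Finset.sum_mul]
        refine Finset.sum_eq_zero fun c _ => ?_
        rw [Finset.mul_sum, Finset.sum_mul]
        refine Finset.sum_eq_zero fun d _ => ?_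
        have h0 : U.E i a a * (ψ (M j c d) * U.E j c d) = ψ (M j c d) * (U.E i a a * U.E j c d) := by
          rw [← mul_assoc, ← hcomm, mul_assoc]
        rw [h0, U.mul_ne (fun h => hj h.symm)]
        simp
      · intro h; exact absurd (Finset.mem_univ i) h
      rw [Finset.mul_sum, Finset.sum_mul, Finset.sum_eq_single a]
      rotate_left
      · intro c _ hc
        rw [Finset.mul_sum, Finset.sum_mul]
        refine Finset.sum_eq_zero fun d _ => ?_
        have h0 : U.E i a a * (ψ (M i c d) * U.E i c d) = ψ (M i c d) * (U.E i a a * U.E i c d) := by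
          rw [← mul_assoc, ← hcomm, mul_assoc]
        rw [h0, U.mul_same, if_neg (fun h => hc h.symm)]
        simp
      · intro h; exact absurd (Finset.mem_univ a) h
      rw [Finset.mul_sum, Finset.sum_mul, Finset.sum_eq_single b]
      rotate_left
      · intro d _ hd
        have h0 : U.E i a a * (ψ (M i a d) * U.E i a d) = ψ (M i a d) * (U.E i a a * U.E i a d) := by
          rw [← mul_assoc, ← hcomm, mul_assoc]
        rw [h0, U.mul_same, if_pos rfl, mul_assoc, U.mul_same, if_neg hd]
        simp
      · intro h; exact absurd (Finset.mem_univ b) h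
      have h0 : U.E i a a * (ψ (M i a b) * U.E i a b) = ψ (M i a b) * (U.E i a a * U.E i a b) := by
        rw [← mul_assoc, ← hcomm, mul_assoc]
      rw [h0, U.mul_same, if_pos rfl, mul_assoc, U.mul_same, if_pos rfl]
    rw [hM, mul_zero, zero_mul] at key
    have hfin : U.E i a b = 0 := by
      have h5 : ψ ((M i a b)⁻¹) * (ψ (M i a b) * U.E i a b) = U.E i a b := by
        rw [← mul_assoc, ← map_mul, inv_mul_cancel₀ (by simpa using hMab), map_one, one_mul]
      rw [← h5, ← key, mul_zero]
    exact hne i a b hfin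
  intro M M' h
  have h0 : U.hom ψ hcomm (M - M') = 0 := by rw [map_sub, h, sub_self]
  have := hker _ h0
  exact sub_eq_zero.mp this

/-- The weighted-rank function on a finite product of matrix rings over a division ring is a
pseudo-rank function. -/
theorem isPseudoRank_wt (hp : ∀ i, 0 < p i) (w : ι → ℝ) (hw : ∀ i, 0 ≤ w i)
    (hsum : ∑ i, (p i : ℝ) * w i = 1) :
    IsPseudoRankFunction (fun M : ∀ i, Matrix (Fin (p i)) (Fin (p i)) D' =>
      ∑ i, (mrk (M i) : ℝ) * w i) := by
  classical
  have hb : ∀ (M : ∀ i, Matrix (Fin (p i)) (Fin (p i)) D') i, (mrk (M i) : ℝ) ≤ (p i : ℝ) := by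
    intro M i
    have := mrk_le_card (M i)
    rw [Fintype.card_fin] at this
    exact_mod_cast this
  refine ⟨?_, ?_, ?_, ?_, ?_, ?_, ?_⟩
  · intro M
    exact Finset.sum_nonneg fun i _ => mul_nonneg (Nat.cast_nonneg _) (hw i)
  · intro M
    rw [← hsum]
    exact Finset.sum_le_sum fun i _ => mul_le_mul_of_nonneg_right (hb M i) (hw i)
  · rw [← hsum]
    refine Finset.sum_congr rfl fun i _ => ?_
    have : mrk ((1 : ∀ i, Matrix (Fin (p i)) (Fin (p i)) D') i) = p i := by
      rw [Pi.one_apply, mrk_one, Fintype.card_fin]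
    rw [this]
  · intro a b
    rw [← Finset.sum_add_distrib]
    refine Finset.sum_le_sum fun i _ => ?_
    rw [← add_mul]
    refine mul_le_mul_of_nonneg_right ?_ (hw i)
    have := mrk_add_le (a i) (b i)
    exact_mod_cast this
  · intro a b
    refine Finset.sum_le_sum fun i _ => ?_
    refine mul_le_mul_of_nonneg_right ?_ (hw i)
    have := mrk_mul_le_left (a i) (b i)
    exact_mod_cast this
  · intro a b
    refine Finset.sum_le_sum fun i _ => ?_
    refine mul_le_mul_of_nonneg_right ?_ (hw i)
    have := mrk_mul_le_right (a i) (b i)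
    exact_mod_cast this
  · intro e f he hf hef hfe
    rw [← Finset.sum_add_distrib]
    refine Finset.sum_congr rfl fun i _ => ?_
    rw [← add_mul]
    congr 1
    have he' : IsIdempotentElem (e i) := congrFun he i
    have hf' : IsIdempotentElem (f i) := congrFun hf i
    have h1 : e i * f i = 0 := congrFun hef i
    have h2 : f i * e i = 0 := congrFun hfe i
    have h3 := mrk_add_of_orth (e i) (f i) he' hf' h1 h2
    rw [Pi.add_apply, h3]
    push_cast
    ring

end LemmaF

section Transport

variable {R : Type*} [Ring R] {R' : Type*} [Ring R'] {ι : Type*} [Fintype ι] [DecidableEq ι]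
  {p : ι → ℕ}

lemma pi_single_sum {I : Type*} [DecidableEq I] {Z : I → Type*} [∀ i, AddCommMonoid (Z i)]
    (i : I) {γ : Type*} (s : Finset γ) (g : γ → Z i) :
    Pi.single i (∑ x ∈ s, g x) = ∑ x ∈ s, Pi.single i (g x) :=
  map_sum (AddMonoidHom.single Z i) g s

/-- Push a matrix-unit system along a unital ring homomorphism. -/
def MUSystem.mapHom (U : MUSystem R ι p) (g : R →+* R') : MUSystem R' ι p where
  E i a b := g (U.E i a b)
  mul_same i a b c d := by
    show g (U.E i a b) * g (U.E i c d) = if b = c then g (U.E i a d) else 0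
    rw [← map_mul, U.mul_same, apply_ite g, map_zero]
  mul_ne {i j} h a b c d := by
    show g (U.E i a b) * g (U.E j c d) = 0
    rw [← map_mul, U.mul_ne h, map_zero]
  sum_one := by
    show (∑ i, ∑ a, g (U.E i a a)) = 1
    have h1 : (∑ i, ∑ a, g (U.E i a a)) = g (∑ i, ∑ a, U.E i a a) := by
      rw [map_sum]
      exact Finset.sum_congr rfl fun i _ => (map_sum g _ _).symm
    rw [h1, U.sum_one, map_one]

/-- Restrict a matrix-unit system to a subring containing its entries. -/
def MUSystem.restrict (U : MUSystem R ι p) (T : Subring R) (h : ∀ i a b, U.E i a b ∈ T) :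
    MUSystem T ι p where
  E i a b := ⟨U.E i a b, h i a b⟩
  mul_same i a b c d := by
    apply Subtype.ext
    push_cast
    rw [U.mul_same]
    by_cases hbc : b = c <;> simp [hbc]
  mul_ne {i j} hij a b c d := by
    apply Subtype.ext
    push_cast
    rw [U.mul_ne hij]
  sum_one := by
    apply Subtype.ext
    push_cast
    exact U.sum_one

lemma MUSystem.mapHom_E (U : MUSystem R ι p) (g : R →+* R') (i : ι) (a b : Fin (p i)) :
    (U.mapHom g).E i a b = g (U.E i a b) := rfl

lemma MUSystem.restrict_E (U : MUSystem R ι p) (T : Subring R) (h : ∀ i a b, U.E i a b ∈ T)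
    (i : ι) (a b : Fin (p i)) : (((U.restrict T h).E i a b : T) : R) = U.E i a b := rfl

variable {D' : Type*} [DivisionRing D']

lemma MUSystem.hom_single (U : MUSystem R ι p) (ψ : D' →+* R)
    (hcomm : ∀ (d : D') i (a b : Fin (p i)), ψ d * U.E i a b = U.E i a b * ψ d)
    (i : ι) (a b : Fin (p i)) :
    U.hom ψ hcomm (Pi.single i (Matrix.single a b (1 : D'))) = U.E i a b := by
  classical
  rw [MUSystem.hom_apply]
  rw [Finset.sum_eq_single i]
  rotate_left
  · intro j _ hj
    refine Finset.sum_eq_zero fun c _ => Finset.sum_eq_zero fun d _ => ?_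
    rw [Pi.single_eq_of_ne hj, Matrix.zero_apply, map_zero, zero_mul]
  · intro h; exact absurd (Finset.mem_univ i) h
  rw [Finset.sum_eq_single a]
  rotate_left
  · intro c _ hc
    refine Finset.sum_eq_zero fun d _ => ?_
    rw [Pi.single_eq_same]
    have h0 : Matrix.single a b (1 : D') c d = 0 := by
      simp only [Matrix.single, Matrix.of_apply, ite_eq_right_iff, and_imp]
      exact fun h1 _ => absurd h1.symm hc
    rw [h0, map_zero, zero_mul]
  · intro h; exact absurd (Finset.mem_univ a) h
  rw [Finset.sum_eq_single b]
  rotate_left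
  · intro d _ hd
    rw [Pi.single_eq_same]
    have h0 : Matrix.single a b (1 : D') a d = 0 := by
      simp only [Matrix.single, Matrix.of_apply, ite_eq_right_iff, and_imp]
      exact fun _ h2 => absurd h2.symm hd
    rw [h0, map_zero, zero_mul]
  · intro h; exact absurd (Finset.mem_univ b) h
  rw [Pi.single_eq_same]
  have h0 : Matrix.single a b (1 : D') a b = 1 := by
    simp [Matrix.single]
  rw [h0, map_one, one_mul]

end Transport

section Canon

variable {ι : Type*} [Fintype ι] [DecidableEq ι] {p : ι → ℕ} (D' : Type*) [DivisionRing D']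

lemma stdDiag_sum (m : ℕ) : (∑ a : Fin m, Matrix.single a a (1 : D')) = 1 := by
  classical
  ext c d
  rw [Matrix.sum_apply]
  rw [Finset.sum_eq_single c (fun x _ hx => by simp [Matrix.single, hx])
    (fun h => absurd (Finset.mem_univ c) h)]
  by_cases h : c = d <;> simp [Matrix.single, Matrix.one_apply, h]

/-- The canonical matrix-unit system of a finite product of matrix rings. -/
def canonMU : MUSystem (∀ i, Matrix (Fin (p i)) (Fin (p i)) D') ι p where
  E i a b := Pi.single i (Matrix.single a b 1)
  mul_same i a b c d := by
    show Pi.single (M := fun i => Matrix (Fin (p i)) (Fin (p i)) D') i (Matrix.single a b (1:D')) * Pi.single (M := fun i => Matrix (Fin (p i)) (Fin (p i)) D') i (Matrix.single c d 1)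
      = if b = c then Pi.single (M := fun i => Matrix (Fin (p i)) (Fin (p i)) D') i (Matrix.single a d 1) else 0
    rw [← Pi.single_mul]
    by_cases h : b = c
    · subst h
      rw [Matrix.single_mul_single_same, if_pos rfl, one_mul]
    · rw [Matrix.single_mul_single_of_ne (h := h), if_neg h, Pi.single_zero]
  mul_ne {i j} hij a b c d := by
    show Pi.single (M := fun i => Matrix (Fin (p i)) (Fin (p i)) D') i (Matrix.single a b (1:D')) * Pi.single (M := fun i => Matrix (Fin (p i)) (Fin (p i)) D') j (Matrix.single c d 1)
      = 0
    funext l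
    rw [Pi.mul_apply]
    by_cases hl : l = i
    · subst hl
      rw [Pi.single_eq_of_ne (fun h : l = j => hij h), mul_zero, Pi.zero_apply]
    · rw [Pi.single_eq_of_ne hl, zero_mul, Pi.zero_apply]
  sum_one := by
    show (∑ i, ∑ a, Pi.single (M := fun i => Matrix (Fin (p i)) (Fin (p i)) D') i
      (Matrix.single a a (1:D'))) = 1
    have h1 : ∀ i, (∑ a : Fin (p i),
        Pi.single (M := fun i => Matrix (Fin (p i)) (Fin (p i)) D') i
          (Matrix.single a a (1 : D')))
        = Pi.single i 1 := by
      intro i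
      rw [← pi_single_sum, stdDiag_sum]
    simp only [h1]
    exact Finset.univ_sum_single (1 : ∀ i, Matrix (Fin (p i)) (Fin (p i)) D')

/-- Diagonal copy of `D'` in the product of matrix rings. -/
def canonPsi : D' →+* (∀ i, Matrix (Fin (p i)) (Fin (p i)) D') :=
  Pi.ringHom fun _ => (Matrix.diagonalRingHom _ _).comp (Pi.constRingHom _ _)

lemma canonPsi_comm : ∀ (d : D') i (a b : Fin (p i)),
    canonPsi D' d * (canonMU D' (p := p)).E i a b
      = (canonMU D' (p := p)).E i a b * canonPsi D' d := by
  intro d i a b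
  funext l
  rw [Pi.mul_apply, Pi.mul_apply]
  by_cases hl : l = i
  · subst hl
    show (Matrix.diagonal fun _ => d) * (Pi.single (M := fun i => Matrix (Fin (p i)) (Fin (p i)) D') l (Matrix.single a b (1:D')) l)
      = (Pi.single (M := fun i => Matrix (Fin (p i)) (Fin (p i)) D') l (Matrix.single a b (1:D')) l) * (Matrix.diagonal fun _ => d)
    rw [Pi.single_eq_same]
    ext c e
    rw [Matrix.diagonal_mul, Matrix.mul_diagonal]
    by_cases h1 : a = c <;> by_cases h2 : b = e <;> simp [Matrix.single, h1, h2]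
  · show (canonPsi D' d l) * (Pi.single (M := fun i => Matrix (Fin (p i)) (Fin (p i)) D') i (Matrix.single a b (1:D')) l)
      = (Pi.single (M := fun i => Matrix (Fin (p i)) (Fin (p i)) D') i (Matrix.single a b (1:D')) l) * (canonPsi D' d l)
    rw [Pi.single_eq_of_ne hl, mul_zero, zero_mul]

lemma canon_hom_id (M : ∀ i, Matrix (Fin (p i)) (Fin (p i)) D') :
    (canonMU D' (p := p)).hom (canonPsi D') (canonPsi_comm D') M = M := by
  classical
  rw [MUSystem.hom_apply]
  have key : ∀ i (a b : Fin (p i)),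
      canonPsi D' (M i a b) * (canonMU D' (p := p)).E i a b
        = Pi.single i (Matrix.single a b (M i a b)) := by
    intro i a b
    funext l
    rw [Pi.mul_apply]
    by_cases hl : l = i
    · subst hl
      show (Matrix.diagonal fun _ => M l a b) * (Pi.single (M := fun i => Matrix (Fin (p i)) (Fin (p i)) D') l (Matrix.single a b (1:D')) l)
        = Pi.single (M := fun i => Matrix (Fin (p i)) (Fin (p i)) D') l (Matrix.single a b (M l a b)) l
      rw [Pi.single_eq_same, Pi.single_eq_same]
      ext c e
      rw [Matrix.diagonal_mul]
      by_cases h1 : a = c <;> by_cases h2 : b = e <;>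
        simp [Matrix.single, h1, h2]
    · show (canonPsi D' (M i a b) l) * (Pi.single (M := fun i => Matrix (Fin (p i)) (Fin (p i)) D') i (Matrix.single a b (1:D')) l)
        = Pi.single (M := fun i => Matrix (Fin (p i)) (Fin (p i)) D') i (Matrix.single a b (M i a b)) l
      rw [Pi.single_eq_of_ne hl, Pi.single_eq_of_ne hl, mul_zero]
  simp only [key]
  calc (∑ i, ∑ a, ∑ b, Pi.single (M := fun i => Matrix (Fin (p i)) (Fin (p i)) D') i
        (Matrix.single a b (M i a b)))
      = ∑ i, Pi.single (M := fun i => Matrix (Fin (p i)) (Fin (p i)) D') i (M i) := by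
        refine Finset.sum_congr rfl fun i _ => ?_
        calc (∑ a, ∑ b, Pi.single (M := fun i => Matrix (Fin (p i)) (Fin (p i)) D') i
              (Matrix.single a b (M i a b)))
            = ∑ a, Pi.single (M := fun i => Matrix (Fin (p i)) (Fin (p i)) D') i
                (∑ b, Matrix.single a b (M i a b)) :=
              Finset.sum_congr rfl fun a _ => (pi_single_sum i _ _).symm
          _ = Pi.single (M := fun i => Matrix (Fin (p i)) (Fin (p i)) D') i
                (∑ a, ∑ b, Matrix.single a b (M i a b)) := (pi_single_sum i _ _).symm
          _ = Pi.single i (M i) := by rw [← Matrix.matrix_eq_sum_single]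
    _ = M := Finset.univ_sum_single M

/-- Two pseudo-rank functions on a finite product of matrix rings over a division ring that
agree on the corner matrix units are equal. -/
theorem pseudoRank_ext (hp : ∀ i, 0 < p i) {P₁ P₂ : (∀ i, Matrix (Fin (p i)) (Fin (p i)) D') → ℝ}
    (h₁ : IsPseudoRankFunction P₁) (h₂ : IsPseudoRankFunction P₂)
    (he : ∀ i, P₁ (Pi.single i (Matrix.single ⟨0, hp i⟩ ⟨0, hp i⟩ 1))
      = P₂ (Pi.single i (Matrix.single ⟨0, hp i⟩ ⟨0, hp i⟩ 1))) :
    P₁ = P₂ := by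
  funext M
  have e₁ := pseudoRank_hom (canonMU D' (p := p)) (canonPsi D') (canonPsi_comm D') hp h₁ M
  have e₂ := pseudoRank_hom (canonMU D' (p := p)) (canonPsi D') (canonPsi_comm D') hp h₂ M
  rw [canon_hom_id] at e₁ e₂
  rw [e₁, e₂]
  refine Finset.sum_congr rfl fun i _ => ?_
  have he' := he i
  show (mrk (M i) : ℝ) * P₁ ((canonMU D' (p := p)).E i ⟨0, hp i⟩ ⟨0, hp i⟩)
    = (mrk (M i) : ℝ) * P₂ ((canonMU D' (p := p)).E i ⟨0, hp i⟩ ⟨0, hp i⟩)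
  rw [show (canonMU D' (p := p)).E i ⟨0, hp i⟩ ⟨0, hp i⟩
    = Pi.single i (Matrix.single ⟨0, hp i⟩ ⟨0, hp i⟩ 1) from rfl, he']

end Canon


section Matricial

variable {K : Type*} [Field K] {B : Type*} [Ring B] [Algebra K B]

/-- Packaged matrix units for a matricial subalgebra of `B`. -/
structure MatUnits (C : Subalgebra K B) where
  k : ℕ
  p : Fin (k + 1) → ℕ
  hp : ∀ i, 0 < p i
  U : MUSystem B (Fin (k + 1)) p
  mem : ∀ i (a b : Fin (p i)), U.E i a b ∈ C
  ne_zero : ∀ i (a b : Fin (p i)), U.E i a b ≠ 0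
  span : ∀ c ∈ C, ∃ κ : ∀ i, Matrix (Fin (p i)) (Fin (p i)) K,
    c = ∑ i, ∑ a, ∑ b, algebraMap K B (κ i a b) * U.E i a b

lemma canonPsi_eq_algebraMap {ι : Type*} [Fintype ι] [DecidableEq ι] {p : ι → ℕ} (x : K) :
    canonPsi (p := p) K x = algebraMap K (∀ i, Matrix (Fin (p i)) (Fin (p i)) K) x := by
  funext i
  show Matrix.diagonal (fun _ => x) = _
  rw [Pi.algebraMap_apply, Matrix.algebraMap_eq_diagonal]
  rfl

theorem exists_matUnits (C : Subalgebra K B) (h : IsMatricialAlgebra K C) :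
    Nonempty (MatUnits C) := by
  classical
  obtain ⟨k, p, hp, ⟨φ⟩⟩ := h
  set g : (∀ i, Matrix (Fin (p i)) (Fin (p i)) K) →ₐ[K] B :=
    C.val.comp (φ.symm : (∀ i, Matrix (Fin (p i)) (Fin (p i)) K) ≃ₐ[K] C).toAlgHom with hg
  have hgC : ∀ x, g x ∈ C := fun x => (φ.symm x).2
  have hginj : Function.Injective g := by
    intro x y hxy
    have : (φ.symm x : B) = (φ.symm y : B) := hxy
    exact φ.symm.injective (Subtype.ext this)
  refine ⟨⟨k, p, hp, (canonMU K).mapHom g.toRingHom, ?_, ?_, ?_⟩⟩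
  · intro i a b
    exact hgC _
  · intro i a b
    show g (Pi.single i (Matrix.single a b 1)) ≠ 0
    intro h0
    have h1 : Pi.single (M := fun i => Matrix (Fin (p i)) (Fin (p i)) K) i
        (Matrix.single a b (1:K)) = 0 := by
      apply hginj
      rw [h0, map_zero]
    have h2 := congrFun h1 i
    rw [Pi.single_eq_same] at h2
    have h3 := congrFun (congrFun h2 a) b
    simp [Matrix.single] at h3
  · intro c hc
    refine ⟨fun i => φ ⟨c, hc⟩ i, ?_⟩
    have h1 := canon_hom_id K (p := p) (φ ⟨c, hc⟩)
    have h2 : g ((canonMU K (p := p)).hom (canonPsi K) (canonPsi_comm K) (φ ⟨c, hc⟩))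
        = g (φ ⟨c, hc⟩) := by rw [h1]
    have h3 : g (φ ⟨c, hc⟩) = c := by
      show (C.val) (φ.symm (φ ⟨c, hc⟩)) = c
      rw [φ.symm_apply_apply]
      rfl
    calc c = g (φ ⟨c, hc⟩) := h3.symm
      _ = g ((canonMU K (p := p)).hom (canonPsi K) (canonPsi_comm K) (φ ⟨c, hc⟩)) := by rw [h1]
      _ = ∑ i, ∑ a, ∑ b, algebraMap K B ((φ ⟨c, hc⟩) i a b)
            * g.toRingHom ((canonMU K (p := p)).E i a b) := by
          rw [MUSystem.hom_apply, map_sum]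
          refine Finset.sum_congr rfl fun i _ => ?_
          rw [map_sum]
          refine Finset.sum_congr rfl fun a _ => ?_
          rw [map_sum]
          refine Finset.sum_congr rfl fun b _ => ?_
          rw [map_mul, canonPsi_eq_algebraMap, AlgHom.commutes]
          rfl

end Matricial

section IncludeRight

variable {K : Type*} [Field K] {D : Type*} [DivisionRing D] [Algebra K D]
  {B : Type*} [Ring B] [Algebra K B]

open scoped TensorProduct

lemma includeRight_injective' :
    Function.Injective (Algebra.TensorProduct.includeRight : B →ₐ[K] D ⊗[K] B) := by
  classical
  have h1 : (1 : D) ≠ 0 := one_ne_zero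
  set W : Submodule K D := Submodule.span K {(1 : D)} with hW
  obtain ⟨q, hq⟩ := Submodule.exists_isCompl W
  set proj : D →ₗ[K] W := W.linearProjOfIsCompl q hq with hproj
  set eW : K ≃ₗ[K] W := LinearEquiv.toSpanNonzeroSingleton K D 1 h1 with heW
  set π : D →ₗ[K] K := eW.symm.toLinearMap.comp proj with hπdef
  have hπ : π 1 = 1 := by
    have hmem : (1 : D) ∈ W := Submodule.mem_span_singleton_self 1
    have h2 : proj 1 = ⟨1, hmem⟩ := by
      have := Submodule.linearProjOfIsCompl_apply_left hq ⟨1, hmem⟩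
      exact this
    have h3 : eW 1 = ⟨1, hmem⟩ := by
      apply Subtype.ext
      show (1 : K) • (1 : D) = 1
      rw [one_smul]
    rw [hπdef]
    show eW.symm (proj 1) = 1
    rw [h2, ← h3, eW.symm_apply_apply]
  have hL : ∀ b : B, (TensorProduct.lid K B)
      ((TensorProduct.map π (LinearMap.id : B →ₗ[K] B)) ((1 : D) ⊗ₜ[K] b)) = b := by
    intro b
    rw [TensorProduct.map_tmul, hπ]
    simp
  intro b b' h
  have h2 : (1 : D) ⊗ₜ[K] b = (1 : D) ⊗ₜ[K] b' := h
  calc b = (TensorProduct.lid K B)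
        ((TensorProduct.map π (LinearMap.id : B →ₗ[K] B)) ((1 : D) ⊗ₜ[K] b)) := (hL b).symm
    _ = (TensorProduct.lid K B)
        ((TensorProduct.map π (LinearMap.id : B →ₗ[K] B)) ((1 : D) ⊗ₜ[K] b')) := by rw [h2]
    _ = b' := hL b'

end IncludeRight

section Small

variable {E : Type*} [DivisionRing E] {n : Type*} [Fintype n] [DecidableEq n]

lemma mrk_zero : mrk (0 : Matrix n n E) = 0 := by
  have h : (0 : Matrix n n E).vecMulLinear = 0 := by
    ext v j; simp [Matrix.vecMulLinear_apply]
  rw [mrk, h, LinearMap.range_zero, finrank_bot]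

lemma stdBasisMatrix_eq_diagOf (z : n) :
    Matrix.single z z (1 : E) = diagOf {z} := by
  ext a b
  simp only [Matrix.single, Matrix.of_apply, diagOf, Matrix.diagonal_apply,
    Finset.mem_singleton]
  by_cases h2 : a = b
  · subst h2
    by_cases h1 : z = a
    · subst h1; simp
    · rw [if_neg (fun h : a = z => h1 h.symm)]
      simp [h1]
  · have h3 : ¬(z = a ∧ z = b) := fun h => h2 (h.1.symm.trans h.2)
    simp [h2, h3]

lemma mrk_std (z : n) : mrk (Matrix.single z z (1 : E)) = 1 := by
  rw [stdBasisMatrix_eq_diagOf, mrk_diagOf, Finset.card_singleton]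

end Small

section Topology

variable (R : Type*) [Ring R]

lemma isClosed_prf : IsClosed {S : R → ℝ | IsPseudoRankFunction S} := by
  classical
  have hset : {S : R → ℝ | IsPseudoRankFunction S} =
      (⋂ x : R, {S : R → ℝ | S x ∈ Set.Icc (0:ℝ) 1}) ∩
      {S : R → ℝ | S 1 = 1} ∩
      (⋂ a : R, ⋂ b : R, {S : R → ℝ | S (a + b) ≤ S a + S b}) ∩
      (⋂ a : R, ⋂ b : R, {S : R → ℝ | S (a * b) ≤ S a}) ∩
      (⋂ a : R, ⋂ b : R, {S : R → ℝ | S (a * b) ≤ S b}) ∩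
      (⋂ e : R, ⋂ f : R, ⋂ (_ : IsIdempotentElem e ∧ IsIdempotentElem f ∧ e * f = 0 ∧ f * e = 0),
        {S : R → ℝ | S (e + f) = S e + S f}) := by
    ext S
    simp only [Set.mem_setOf_eq, Set.mem_inter_iff, Set.mem_iInter, Set.mem_Icc]
    constructor
    · intro h
      exact ⟨⟨⟨⟨⟨fun x => ⟨h.nonneg x, h.le_one x⟩, h.map_one⟩, h.subadditive⟩,
        h.mul_le_left⟩, h.mul_le_right⟩,
        fun e f hh => h.add_of_orthogonal e f hh.1 hh.2.1 hh.2.2.1 hh.2.2.2⟩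
    · rintro ⟨⟨⟨⟨⟨h1, h2⟩, h3⟩, h4⟩, h5⟩, h6⟩
      exact ⟨fun x => (h1 x).1, fun x => (h1 x).2, h2, h3, h4, h5,
        fun e f he hf hef hfe => h6 e f ⟨he, hf, hef, hfe⟩⟩
  rw [hset]
  refine IsClosed.inter (IsClosed.inter (IsClosed.inter (IsClosed.inter (IsClosed.inter ?_ ?_) ?_) ?_) ?_) ?_
  · exact isClosed_iInter fun x => isClosed_Icc.preimage (continuous_apply x)
  · exact isClosed_eq (continuous_apply 1) continuous_const
  · exact isClosed_iInter fun a => isClosed_iInter fun b =>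
      isClosed_le (continuous_apply _) ((continuous_apply a).add (continuous_apply b))
  · exact isClosed_iInter fun a => isClosed_iInter fun b =>
      isClosed_le (continuous_apply _) (continuous_apply a)
  · exact isClosed_iInter fun a => isClosed_iInter fun b =>
      isClosed_le (continuous_apply _) (continuous_apply b)
  · exact isClosed_iInter fun e => isClosed_iInter fun f => isClosed_iInter fun _ =>
      isClosed_eq (continuous_apply _) ((continuous_apply e).add (continuous_apply f))

lemma isCompact_prf : IsCompact {S : R → ℝ | IsPseudoRankFunction S} := by
  refine IsCompact.of_isClosed_subset (s := Set.univ.pi fun _ : R => Set.Icc (0:ℝ) 1)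
    (isCompact_univ_pi fun _ => isCompact_Icc) (isClosed_prf R) ?_
  intro S hS
  rw [Set.mem_univ_pi]
  exact fun x => ⟨hS.nonneg x, hS.le_one x⟩

end Topology


end AraClaramunt

namespace AraClaramunt

set_option maxHeartbeats 2000000 in
/-- The restriction map `S ↦ S|_{1 ⊗ B}` is an affine homeomorphism from the space of
pseudo-rank functions of `A = D ⊗_K B` (with the topology of pointwise convergence) onto the
space of pseudo-rank functions of `B`, where `D` is a division ring with center `K` and `B` is
an ultramatricial `K`-algebra (as used in the proof of Theorem 3.2 of Ara–Claramunt). -/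
theorem statement17 (D : Type) [DivisionRing D] (K : Type) [Field K] [Algebra K D]
    (hcenter : Set.range (algebraMap K D) = (Subring.center D : Set D))
    (B : Type) [Ring B] [Algebra K B] (hB : IsUltramatricialAlgebra K B) :
    ∃ h : {S : D ⊗[K] B → ℝ // IsPseudoRankFunction S} ≃ₜ
        {S : B → ℝ // IsPseudoRankFunction S},
      (∀ S : {S : D ⊗[K] B → ℝ // IsPseudoRankFunction S},
        ((h S : B → ℝ)) = fun b => (S : D ⊗[K] B → ℝ) ((1 : D) ⊗ₜ[K] b)) ∧
      ∀ (S₁ S₂ S₃ : {S : D ⊗[K] B → ℝ // IsPseudoRankFunction S}) (t : ℝ),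
        0 ≤ t → t ≤ 1 →
        ((S₃ : D ⊗[K] B → ℝ)
          = fun a => t * (S₁ : D ⊗[K] B → ℝ) a + (1 - t) * (S₂ : D ⊗[K] B → ℝ) a) →
        ((h S₃ : B → ℝ)
          = fun b => t * (h S₁ : B → ℝ) b + (1 - t) * (h S₂ : B → ℝ) b) := by
  classical
  obtain ⟨C, hCstep, hCmat, hCcover⟩ := hB
  have hCmono : Monotone C := monotone_nat_of_le_succ hCstep
  have hMUex : ∀ n, Nonempty (MatUnits (C n)) := fun n => exists_matUnits (C n) (hCmat n)
  set MU : ∀ n, MatUnits (C n) := fun n => (hMUex n).some with hMUdef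
  set ψD : D →+* D ⊗[K] B := Algebra.TensorProduct.includeLeftRingHom with hψD
  set ιR : B →ₐ[K] D ⊗[K] B := Algebra.TensorProduct.includeRight with hιR
  have hιR_inj : Function.Injective ιR := includeRight_injective'
  have hιR_app : ∀ b : B, ιR b = (1 : D) ⊗ₜ[K] b := fun b =>
    Algebra.TensorProduct.includeRight_apply b
  have hψD_app : ∀ d : D, ψD d = d ⊗ₜ[K] (1 : B) := fun d =>
    Algebra.TensorProduct.includeLeftRingHom_apply d
  set UA : ∀ n, MUSystem (D ⊗[K] B) (Fin ((MU n).k + 1)) (MU n).p :=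
    fun n => (MU n).U.mapHom ιR.toRingHom with hUAdef
  have hUA_E : ∀ n i (a b : Fin ((MU n).p i)),
      (UA n).E i a b = (1 : D) ⊗ₜ[K] ((MU n).U.E i a b) := fun n i a b => rfl
  have hcommA : ∀ n (d : D) i (a b : Fin ((MU n).p i)),
      ψD d * (UA n).E i a b = (UA n).E i a b * ψD d := by
    intro n d i a b
    rw [hUA_E, hψD_app, Algebra.TensorProduct.tmul_mul_tmul,
      Algebra.TensorProduct.tmul_mul_tmul, mul_one, one_mul, mul_one, one_mul]
  set T : ℕ → Subring (D ⊗[K] B) := fun n => ((UA n).hom ψD (hcommA n)).range with hTdef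
  -- pure tensors with second leg in `C n` belong to `T n`
  have hS1 : ∀ n (d : D) (b : B), b ∈ C n → d ⊗ₜ[K] b ∈ T n := by
    intro n d b hb
    obtain ⟨κ, hκ⟩ := (MU n).span b hb
    refine ⟨fun i => (κ i).map (fun x => x • d), ?_⟩
    rw [MUSystem.hom_apply]
    have hterm : ∀ i (a : Fin ((MU n).p i)) (b' : Fin ((MU n).p i)),
        ψD (((κ i).map (fun x => x • d)) a b') * (UA n).E i a b'
          = d ⊗ₜ[K] (algebraMap K B (κ i a b') * (MU n).U.E i a b') := by
      intro i a b'
      rw [Matrix.map_apply, hUA_E, hψD_app, Algebra.TensorProduct.tmul_mul_tmul, mul_one,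
        one_mul, TensorProduct.smul_tmul, Algebra.smul_def]
    simp only [hterm]
    rw [hκ]
    rw [TensorProduct.tmul_sum]
    refine Finset.sum_congr rfl fun i _ => ?_
    rw [TensorProduct.tmul_sum]
    refine Finset.sum_congr rfl fun a _ => ?_
    rw [TensorProduct.tmul_sum]
  have hTmono : ∀ {m n' : ℕ}, m ≤ n' → T m ≤ T n' := by
    intro m n' h x hx
    obtain ⟨M, rfl⟩ := hx
    have hform : ((UA m).hom ψD (hcommA m)) M
        = ∑ i, ∑ a, ∑ b, (M i a b) ⊗ₜ[K] ((MU m).U.E i a b) := by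
      rw [MUSystem.hom_apply]
      refine Finset.sum_congr rfl fun i _ => Finset.sum_congr rfl fun a _ =>
        Finset.sum_congr rfl fun b _ => ?_
      rw [hUA_E, hψD_app, Algebra.TensorProduct.tmul_mul_tmul, mul_one, one_mul]
    rw [hform]
    exact Subring.sum_mem _ fun i _ => Subring.sum_mem _ fun a _ => Subring.sum_mem _
      fun b _ => hS1 n' _ _ (hCmono h ((MU m).mem i a b))
  have hS2 : ∀ x : D ⊗[K] B, ∃ n, x ∈ T n := by
    intro x
    induction x using TensorProduct.induction_on with
    | zero => exact ⟨0, Subring.zero_mem _⟩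
    | tmul d b =>
      obtain ⟨m, hm⟩ := hCcover b
      exact ⟨m, hS1 m d b hm⟩
    | add x y hx hy =>
      obtain ⟨n₁, h₁⟩ := hx
      obtain ⟨n₂, h₂⟩ := hy
      exact ⟨max n₁ n₂, Subring.add_mem _ (hTmono (le_max_left _ _) h₁)
        (hTmono (le_max_right _ _) h₂)⟩
  have hUAne : ∀ n i (a b : Fin ((MU n).p i)), (UA n).E i a b ≠ 0 := by
    intro n i a b h0
    apply (MU n).ne_zero i a b
    apply hιR_inj
    rw [map_zero]
    exact h0
  have hinj : ∀ n, Function.Injective ((UA n).hom ψD (hcommA n)) := fun n =>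
    hom_injective _ _ _ (MU n).hp (hUAne n)
  set eqv : ∀ n, (∀ i, Matrix (Fin ((MU n).p i)) (Fin ((MU n).p i)) D) ≃+* (T n) :=
    fun n => RingEquiv.ofBijective ((UA n).hom ψD (hcommA n)).rangeRestrict
      ⟨fun x y hxy => hinj n (congrArg Subtype.val hxy),
       ((UA n).hom ψD (hcommA n)).rangeRestrict_surjective⟩ with heqvdef
  have heqv_app : ∀ n M, ((eqv n M : T n) : D ⊗[K] B) = ((UA n).hom ψD (hcommA n)) M :=
    fun n M => rfl
  -- injectivity of the restriction map
  have hres_inj_aux : ∀ (S₁ S₂ : (D ⊗[K] B) → ℝ), IsPseudoRankFunction S₁ →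
      IsPseudoRankFunction S₂ →
      (∀ b, S₁ ((1:D) ⊗ₜ[K] b) = S₂ ((1:D) ⊗ₜ[K] b)) → S₁ = S₂ := by
    intro S₁ S₂ h₁ h₂ hagree
    funext x
    obtain ⟨n, hn⟩ := hS2 x
    obtain ⟨M, rfl⟩ := hn
    rw [pseudoRank_hom (UA n) ψD (hcommA n) (MU n).hp h₁ M,
        pseudoRank_hom (UA n) ψD (hcommA n) (MU n).hp h₂ M]
    refine Finset.sum_congr rfl fun i _ => ?_
    rw [hUA_E, hagree]
  -- the restriction map
  have hres_prf : ∀ S : {S : D ⊗[K] B → ℝ // IsPseudoRankFunction S},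
      IsPseudoRankFunction (fun b : B => S.1 ((1:D) ⊗ₜ[K] b)) := by
    intro S
    exact S.2.comp ιR.toRingHom
  set res : {S : D ⊗[K] B → ℝ // IsPseudoRankFunction S} → {S : B → ℝ // IsPseudoRankFunction S} :=
    fun S => ⟨fun b => S.1 ((1:D) ⊗ₜ[K] b), hres_prf S⟩ with hresdef
  -- surjectivity of the restriction map
  have hsurj : ∀ NN : {S : B → ℝ // IsPseudoRankFunction S}, ∃ SS, res SS = NN := by
    intro NN
    obtain ⟨N, hN⟩ := NN
    have hcommB : ∀ n (x : K) i (a b : Fin ((MU n).p i)),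
        (algebraMap K B) x * (MU n).U.E i a b = (MU n).U.E i a b * algebraMap K B x :=
      fun n x i a b => Algebra.commutes x _
    have hΦB_mem : ∀ n X, (MU n).U.hom (algebraMap K B) (hcommB n) X ∈ C n := by
      intro n X
      rw [MUSystem.hom_apply]
      exact Subalgebra.sum_mem _ fun i _ => Subalgebra.sum_mem _ fun a _ =>
        Subalgebra.sum_mem _ fun b _ => Subalgebra.mul_mem _
          (Subalgebra.algebraMap_mem _ _) ((MU n).mem i a b)
    have hcod_mem : ∀ n X, ιR.toRingHom ((MU n).U.hom (algebraMap K B) (hcommB n) X) ∈ T n := by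
      intro n X
      exact hS1 n 1 _ (hΦB_mem n X)
    set cod : ∀ n, (∀ i, Matrix (Fin ((MU n).p i)) (Fin ((MU n).p i)) K) →+* T n :=
      fun n => (ιR.toRingHom.comp ((MU n).U.hom (algebraMap K B) (hcommB n))).codRestrict
        (T n) (hcod_mem n) with hcoddef
    set w : ∀ n, Fin ((MU n).k + 1) → ℝ :=
      fun n i => N ((MU n).U.E i ⟨0, (MU n).hp i⟩ ⟨0, (MU n).hp i⟩) with hwdef
    have hw : ∀ n i, 0 ≤ w n i := fun n i => hN.nonneg _
    have hwsum : ∀ n, ∑ i, ((MU n).p i : ℝ) * w n i = 1 := by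
      intro n
      have h1 := pseudoRank_hom (MU n).U (algebraMap K B) (hcommB n) (MU n).hp hN 1
      rw [map_one, hN.map_one] at h1
      simp only [hwdef]
      have h2 : (∑ i, ((MU n).p i : ℝ) * N ((MU n).U.E i ⟨0, (MU n).hp i⟩ ⟨0, (MU n).hp i⟩))
          = ∑ i, (mrk ((1 : ∀ i, Matrix (Fin ((MU n).p i)) (Fin ((MU n).p i)) K) i) : ℝ)
              * N ((MU n).U.E i ⟨0, (MU n).hp i⟩ ⟨0, (MU n).hp i⟩) := by
        refine Finset.sum_congr rfl fun i _ => ?_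
        rw [Pi.one_apply, mrk_one, Fintype.card_fin]
      exact h2.trans h1.symm
    set Sw : ∀ n, (T n) → ℝ := fun n x => ∑ i, (mrk ((eqv n).symm x i) : ℝ) * w n i with hSwdef
    have hSwP : ∀ n, IsPseudoRankFunction (Sw n) := by
      intro n
      exact (isPseudoRank_wt (MU n).hp (w n) (hw n) (hwsum n)).comp
        ((eqv n).symm : T n ≃+* _).toRingHom
    -- value of `Sw` at the canonical units
    have hSw_unit : ∀ n i, Sw n (eqv n (Pi.single i
        (Matrix.single ⟨0, (MU n).hp i⟩ ⟨0, (MU n).hp i⟩ (1:D)))) = w n i := by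
      intro n i
      rw [hSwdef]
      simp only [(eqv n).symm_apply_apply]
      rw [Finset.sum_eq_single i]
      · rw [Pi.single_eq_same, mrk_std, Nat.cast_one, one_mul]
      · intro j _ hj
        rw [Pi.single_eq_of_ne hj, mrk_zero, Nat.cast_zero, zero_mul]
      · intro h; exact absurd (Finset.mem_univ i) h
    -- the star lemma
    have hstar : ∀ n (b : B) (hb : b ∈ C n), Sw n ⟨(1:D) ⊗ₜ[K] b, hS1 n 1 b hb⟩ = N b := by
      intro n b hb
      have hP₁ : IsPseudoRankFunction
          (fun X => N ((MU n).U.hom (algebraMap K B) (hcommB n) X)) :=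
        hN.comp _
      have hP₂ : IsPseudoRankFunction (fun X => Sw n (cod n X)) := (hSwP n).comp (cod n)
      have hcodsingle : ∀ i, cod n (Pi.single i
          (Matrix.single ⟨0, (MU n).hp i⟩ ⟨0, (MU n).hp i⟩ (1:K)))
          = eqv n (Pi.single i
            (Matrix.single ⟨0, (MU n).hp i⟩ ⟨0, (MU n).hp i⟩ (1:D))) := by
        intro i
        apply Subtype.ext
        show ιR.toRingHom ((MU n).U.hom (algebraMap K B) (hcommB n) (Pi.single i _))
          = ((UA n).hom ψD (hcommA n)) (Pi.single i _)
        rw [MUSystem.hom_single, MUSystem.hom_single]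
        rfl
      have hePQ : (fun X => N ((MU n).U.hom (algebraMap K B) (hcommB n) X))
          = (fun X => Sw n (cod n X)) := by
        refine pseudoRank_ext K (MU n).hp hP₁ hP₂ ?_
        intro i
        show N ((MU n).U.hom (algebraMap K B) (hcommB n) (Pi.single i _))
          = Sw n (cod n (Pi.single i _))
        rw [MUSystem.hom_single, hcodsingle, hSw_unit]
      obtain ⟨κ, hκ⟩ := (MU n).span b hb
      have h1 : (MU n).U.hom (algebraMap K B) (hcommB n) κ = b := by
        rw [MUSystem.hom_apply]
        exact hκ.symm
      have h2 := congrFun hePQ κ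
      rw [h1] at h2
      rw [h2]
      congr 1
      apply Subtype.ext
      show (1:D) ⊗ₜ[K] b = ιR.toRingHom ((MU n).U.hom (algebraMap K B) (hcommB n) κ)
      rw [h1]
      rfl
    -- consistency along the tower
    have hcons : ∀ {m n' : ℕ} (h : m ≤ n') (x : T m),
        Sw m x = Sw n' (Subring.inclusion (hTmono h) x) := by
      intro m n' h x
      have hP₁ : IsPseudoRankFunction (fun M => Sw m (eqv m M)) :=
        (hSwP m).comp (eqv m : _ ≃+* T m).toRingHom
      have hP₂ : IsPseudoRankFunction
          (fun M => Sw n' (Subring.inclusion (hTmono h) (eqv m M))) :=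
        (hSwP n').comp ((Subring.inclusion (hTmono h)).comp (eqv m : _ ≃+* T m).toRingHom)
      have hePQ : (fun M => Sw m (eqv m M))
          = (fun M => Sw n' (Subring.inclusion (hTmono h) (eqv m M))) := by
        refine pseudoRank_ext D (MU m).hp hP₁ hP₂ ?_
        intro i
        show Sw m (eqv m (Pi.single i _)) = Sw n' (Subring.inclusion (hTmono h) (eqv m (Pi.single i _)))
        rw [hSw_unit]
        have hmem' : (MU m).U.E i ⟨0, (MU m).hp i⟩ ⟨0, (MU m).hp i⟩ ∈ C n' :=
          hCmono h ((MU m).mem i _ _)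
        have hval : Subring.inclusion (hTmono h) (eqv m (Pi.single i
            (Matrix.single ⟨0, (MU m).hp i⟩ ⟨0, (MU m).hp i⟩ (1:D))))
            = ⟨(1:D) ⊗ₜ[K] ((MU m).U.E i ⟨0, (MU m).hp i⟩ ⟨0, (MU m).hp i⟩),
                hS1 n' 1 _ hmem'⟩ := by
          apply Subtype.ext
          show (((UA m).hom ψD (hcommA m)) (Pi.single i _) : D ⊗[K] B) = (1:D) ⊗ₜ[K] _
          rw [MUSystem.hom_single]
          rfl
        rw [hval, hstar n' _ hmem']
      obtain ⟨M, hM⟩ := (eqv m).surjective x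
      have := congrFun hePQ M
      rw [hM] at this
      exact this
    -- glue
    set Sg : (D ⊗[K] B) → ℝ :=
      fun x => Sw (Nat.find (hS2 x)) ⟨x, Nat.find_spec (hS2 x)⟩ with hSgdef
    have hglue : ∀ (n : ℕ) (x : D ⊗[K] B) (hx : x ∈ T n), Sg x = Sw n ⟨x, hx⟩ := by
      intro n x hx
      have hfind := Nat.find_spec (hS2 x)
      show Sw (Nat.find (hS2 x)) ⟨x, hfind⟩ = Sw n ⟨x, hx⟩
      have h₁ := hcons (le_max_left (Nat.find (hS2 x)) n) (⟨x, hfind⟩ : T (Nat.find (hS2 x)))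
      have h₂ := hcons (le_max_right (Nat.find (hS2 x)) n) (⟨x, hx⟩ : T n)
      have h3 : Subring.inclusion (hTmono (le_max_left (Nat.find (hS2 x)) n)) ⟨x, hfind⟩
          = Subring.inclusion (hTmono (le_max_right (Nat.find (hS2 x)) n)) ⟨x, hx⟩ := rfl
      rw [h₁, h3, ← h₂]
    have hSgP : IsPseudoRankFunction Sg := by
      refine ⟨?_, ?_, ?_, ?_, ?_, ?_, ?_⟩
      · intro x
        obtain ⟨n, hn⟩ := hS2 x
        rw [hglue n x hn]
        exact (hSwP n).nonneg _
      · intro x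
        obtain ⟨n, hn⟩ := hS2 x
        rw [hglue n x hn]
        exact (hSwP n).le_one _
      · rw [hglue 0 1 (Subring.one_mem _)]
        exact (hSwP 0).map_one
      · intro a b
        obtain ⟨n₁, h₁⟩ := hS2 a
        obtain ⟨n₂, h₂⟩ := hS2 b
        have ha : a ∈ T (max n₁ n₂) := hTmono (le_max_left _ _) h₁
        have hb : b ∈ T (max n₁ n₂) := hTmono (le_max_right _ _) h₂
        rw [hglue _ _ (Subring.add_mem _ ha hb), hglue _ _ ha, hglue _ _ hb]
        exact (hSwP _).subadditive ⟨a, ha⟩ ⟨b, hb⟩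
      · intro a b
        obtain ⟨n₁, h₁⟩ := hS2 a
        obtain ⟨n₂, h₂⟩ := hS2 b
        have ha : a ∈ T (max n₁ n₂) := hTmono (le_max_left _ _) h₁
        have hb : b ∈ T (max n₁ n₂) := hTmono (le_max_right _ _) h₂
        rw [hglue _ _ (Subring.mul_mem _ ha hb), hglue _ _ ha]
        exact (hSwP _).mul_le_left ⟨a, ha⟩ ⟨b, hb⟩
      · intro a b
        obtain ⟨n₁, h₁⟩ := hS2 a
        obtain ⟨n₂, h₂⟩ := hS2 b
        have ha : a ∈ T (max n₁ n₂) := hTmono (le_max_left _ _) h₁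
        have hb : b ∈ T (max n₁ n₂) := hTmono (le_max_right _ _) h₂
        rw [hglue _ _ (Subring.mul_mem _ ha hb), hglue _ _ hb]
        exact (hSwP _).mul_le_right ⟨a, ha⟩ ⟨b, hb⟩
      · intro e f he hf hef hfe
        obtain ⟨n₁, h₁⟩ := hS2 e
        obtain ⟨n₂, h₂⟩ := hS2 f
        have ha : e ∈ T (max n₁ n₂) := hTmono (le_max_left _ _) h₁
        have hb : f ∈ T (max n₁ n₂) := hTmono (le_max_right _ _) h₂
        rw [hglue _ _ (Subring.add_mem _ ha hb), hglue _ _ ha, hglue _ _ hb]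
        refine (hSwP _).add_of_orthogonal ⟨e, ha⟩ ⟨f, hb⟩ ?_ ?_ ?_ ?_
        · exact Subtype.ext he
        · exact Subtype.ext hf
        · exact Subtype.ext hef
        · exact Subtype.ext hfe
    have hrestr : ∀ b : B, Sg ((1:D) ⊗ₜ[K] b) = N b := by
      intro b
      obtain ⟨m, hm⟩ := hCcover b
      rw [hglue m _ (hS1 m 1 b hm)]
      exact hstar m b hm
    exact ⟨⟨Sg, hSgP⟩, Subtype.ext (funext hrestr)⟩
  -- the bijection
  have hbij : Function.Bijective res := by
    constructor
    · intro S₁ S₂ h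
      apply Subtype.ext
      exact hres_inj_aux S₁.1 S₂.1 S₁.2 S₂.2 (fun b => congrFun (congrArg Subtype.val h) b)
    · exact hsurj
  -- topology
  have hcs : CompactSpace {S : D ⊗[K] B → ℝ // IsPseudoRankFunction S} :=
    isCompact_iff_compactSpace.mp (isCompact_prf (D ⊗[K] B))
  have hcont : Continuous res := by
    apply Continuous.subtype_mk
    exact continuous_pi fun b => (continuous_apply ((1:D) ⊗ₜ[K] b)).comp continuous_subtype_val
  let e : {S : D ⊗[K] B → ℝ // IsPseudoRankFunction S} ≃ {S : B → ℝ // IsPseudoRankFunction S} :=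
    Equiv.ofBijective res hbij
  have hecont : Continuous e := hcont
  refine ⟨hecont.homeoOfEquivCompactToT2, fun S => rfl, ?_⟩
  intro S₁ S₂ S₃ t ht0 ht1 h3
  funext b
  show S₃.1 ((1:D) ⊗ₜ[K] b) = t * S₁.1 ((1:D) ⊗ₜ[K] b) + (1 - t) * S₂.1 ((1:D) ⊗ₜ[K] b)
  rw [h3]

end AraClaramunt
end
end
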